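/- arXiv:2502.18788 — 6 statements merged into one kernel-verified Lean document; each statement's English description precedes it below -/
import Mathlib

section
/- Let s > 1 and let φ : [2π,∞) → (0,∞) be a continuous function with φ(t) → 0 as t → ∞ such that S_φ is an almost circular spiral arc. If S_φ is a (1/s)-Hölder arc, i.e., there exist a homeomorphism f from [0,1] onto S_φ and a constant H > 0 with |f(x) − f(y)| ≤ H|x − y|^{1/s} for all x, y ∈ [0,1], then the series ∑_{n=1}^∞ φ_n^s converges. -/
/-- The parametrizing map `t ↦ φ(t) e^{it}` of a spiral. -/
noncomputable def spiralMap (φ : ℝ → ℝ) : ℝ → ℂ :=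
  fun t => (φ t : ℂ) * Complex.exp (t * Complex.I)

/-- The spiral `S_φ = {φ(t) e^{it} : t ∈ [2π, ∞)} ∪ {0}`. -/
noncomputable def spiral (φ : ℝ → ℝ) : Set ℂ :=
  spiralMap φ '' Set.Ici (2 * Real.pi) ∪ {0}

/-- `φ_j = max{φ(t) : t ∈ [2πj, 2π(j+1)]}`. -/
noncomputable def phiMax (φ : ℝ → ℝ) (j : ℕ) : ℝ :=
  sSup (φ '' Set.Icc (2 * Real.pi * j) (2 * Real.pi * (j + 1)))

/-- `S_φ` is a spiral arc: the map `t ↦ φ(t) e^{it}` is injective on `[2π, ∞)`. -/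
def IsSpiralArc (φ : ℝ → ℝ) : Prop :=
  Set.InjOn (spiralMap φ) (Set.Ici (2 * Real.pi))

/-- `S_φ` is almost circular with constant `C`: the length of each full turn `S_φ^j`
(the total variation of `spiralMap φ` over `[2πj, 2π(j+1)]`) is at most `C * φ_j`. -/
def IsAlmostCircularWith (φ : ℝ → ℝ) (C : ℝ) : Prop :=
  ∀ j : ℕ, 1 ≤ j →
    eVariationOn (spiralMap φ) (Set.Icc (2 * Real.pi * j) (2 * Real.pi * (j + 1)))
      ≤ ENNReal.ofReal (C * phiMax φ j)

/-- `S` is an `α`-Hölder arc: there is a homeomorphism `f` from `[0,1]` onto `S`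
(equivalently, a continuous injective surjection from the compact set `[0,1]`)
and `H > 0` with `|f x - f y| ≤ H |x - y| ^ α`. -/
def IsHolderArc (S : Set ℂ) (α : ℝ) : Prop :=
  ∃ f : ℝ → ℂ, Set.InjOn f (Set.Icc 0 1) ∧ f '' Set.Icc 0 1 = S ∧
    ∃ H > 0, ∀ x ∈ Set.Icc (0:ℝ) 1, ∀ y ∈ Set.Icc (0:ℝ) 1,
      ‖f x - f y‖ ≤ H * |x - y| ^ α

lemma continuousOn_invFunOn_of_isCompact {α β : Type*} [TopologicalSpace α] [TopologicalSpace β]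
    [T2Space β] [Nonempty α] {f : α → β} {K : Set α} (hK : IsCompact K) (hf : ContinuousOn f K)
    (hinj : Set.InjOn f K) : ContinuousOn (Function.invFunOn f K) (f '' K) := by
  rw [continuousOn_iff_isClosed]
  intro t ht
  refine ⟨f '' (K ∩ t), ((hK.inter_right ht).image_of_continuousOn
    (hf.mono Set.inter_subset_left)).isClosed, ?_⟩
  ext y
  simp only [Set.mem_inter_iff, Set.mem_preimage]
  constructor
  · rintro ⟨hyt, x, hxK, rfl⟩
    exact ⟨⟨x, ⟨hxK, by rwa [hinj.leftInvOn_invFunOn hxK] at hyt⟩, rfl⟩, ⟨x, hxK, rfl⟩⟩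
  · rintro ⟨⟨x, ⟨hxK, hxt⟩, rfl⟩, -⟩
    exact ⟨by rwa [hinj.leftInvOn_invFunOn hxK], ⟨x, hxK, rfl⟩⟩

lemma icc_dichotomy {g : ℝ → ℝ} {a : ℝ} (hc : ContinuousOn g (Set.Ici a))
    (hi : Set.InjOn g (Set.Ici a)) :
    (∀ u v, a ≤ u → u ≤ v → g u ≤ g v) ∨ (∀ u v, a ≤ u → u ≤ v → g v ≤ g u) := by
  rcases le_or_gt (g a) (g (a + 1)) with h | h
  · left
    intro u v hu huv
    set T := max v (a + 1) with hT
    have haT : a ≤ T := le_trans (le_trans hu huv) (le_max_left _ _)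
    have hsub : Set.Icc a T ⊆ Set.Ici a := fun x hx => hx.1
    rcases ContinuousOn.strictMonoOn_of_injOn_Icc' haT (hc.mono hsub) (hi.mono hsub)
      with hm | hA
    · exact hm.monotoneOn ⟨hu, huv.trans (le_max_left _ _)⟩
        ⟨hu.trans huv, le_max_left _ _⟩ huv
    · have := hA ⟨le_rfl, haT⟩ ⟨by linarith, le_max_right _ _⟩ (by linarith)
      linarith
  · right
    intro u v hu huv
    set T := max v (a + 1) with hT
    have haT : a ≤ T := le_trans (le_trans hu huv) (le_max_left _ _)
    have hsub : Set.Icc a T ⊆ Set.Ici a := fun x hx => hx.1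
    rcases ContinuousOn.strictMonoOn_of_injOn_Icc' haT (hc.mono hsub) (hi.mono hsub)
      with hm | hA
    · have := hm ⟨le_rfl, haT⟩ ⟨by linarith, le_max_right _ _⟩ (by linarith)
      linarith
    · exact hA.antitoneOn ⟨hu, huv.trans (le_max_left _ _)⟩
        ⟨hu.trans huv, le_max_left _ _⟩ huv

lemma sum_sub_shift (b : ℕ → ℝ) (N : ℕ) :
    ∑ n ∈ Finset.range N, (b (n + 2) - b n) = b N + b (N + 1) - b 0 - b 1 := by
  induction N with
  | zero => simp
  | succ N ih => rw [Finset.sum_range_succ, ih]; ring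

/-- If `S_φ` is an almost circular spiral arc, `s > 1`, and `S_φ` is a `(1/s)`-Hölder arc,
then `∑ φ_n ^ s` converges. -/
theorem summable_of_spiral_isHolderArc (φ : ℝ → ℝ) (s : ℝ) (hs : 1 < s)
    (hcont : ContinuousOn φ (Set.Ici (2 * Real.pi)))
    (hpos : ∀ t, 2 * Real.pi ≤ t → 0 < φ t)
    (hlim : Filter.Tendsto φ Filter.atTop (nhds 0))
    (harc : IsSpiralArc φ)
    (C : ℝ) (hC : 0 < C) (hAC : IsAlmostCircularWith φ C)
    (hHolder : IsHolderArc (spiral φ) (1 / s)) :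
    Summable fun n : ℕ => phiMax φ (n + 1) ^ s := by
  obtain ⟨f, hfinj, hfim, H, hH, hHold⟩ := hHolder
  have hπ : (0:ℝ) < Real.pi := Real.pi_pos
  have hs0 : (0:ℝ) < s := lt_trans one_pos hs
  have hs1 : (0:ℝ) < 1 / s := by positivity
  -- continuity of f on [0,1]
  have hfc : ContinuousOn f (Set.Icc 0 1) := by
    intro x hx
    rw [ContinuousWithinAt, tendsto_iff_dist_tendsto_zero]
    apply squeeze_zero' (g := fun y => H * |y - x| ^ (1 / s))
    · exact Filter.Eventually.of_forall fun y => dist_nonneg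
    · filter_upwards [self_mem_nhdsWithin] with y hy
      have h1 := hHold y hy x hx
      rwa [Complex.dist_eq]
    · have h1 : Filter.Tendsto (fun y : ℝ => |y - x|) (nhdsWithin x (Set.Icc 0 1)) (nhds 0) := by
        have h2 : Filter.Tendsto (fun y : ℝ => |y - x|) (nhds x) (nhds 0) := by
          have hc2 : Continuous (fun y : ℝ => |y - x|) :=
            continuous_abs.comp (continuous_id.sub continuous_const)
          have := hc2.tendsto x
          simpa using this
        exact h2.mono_left nhdsWithin_le_nhds
      have h2 : ContinuousAt (fun d : ℝ => H * d ^ (1 / s)) 0 :=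
        continuousAt_const.mul (Real.continuousAt_rpow_const 0 (1 / s) (Or.inr hs1.le))
      have h3 := (h2.tendsto).comp h1
      simp only [Function.comp_def] at h3
      rw [Real.zero_rpow (ne_of_gt hs1), mul_zero] at h3
      exact h3
  -- inverse ψ of the parametrization
  have hKcomp : IsCompact (Set.Icc (0:ℝ) 1) := isCompact_Icc
  have hinvc : ContinuousOn (Function.invFunOn f (Set.Icc 0 1)) (f '' Set.Icc 0 1) :=
    continuousOn_invFunOn_of_isCompact hKcomp hfc hfinj
  have hsmc : ContinuousOn (spiralMap φ) (Set.Ici (2 * Real.pi)) := by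
    apply ContinuousOn.mul
    · exact Complex.continuous_ofReal.comp_continuousOn hcont
    · exact (Complex.continuous_exp.comp
        (Complex.continuous_ofReal.mul continuous_const)).continuousOn
  have hmem : ∀ t, 2 * Real.pi ≤ t → spiralMap φ t ∈ f '' Set.Icc 0 1 := by
    intro t ht
    rw [hfim]
    exact Set.mem_union_left _ ⟨t, ht, rfl⟩
  set ψ : ℝ → ℝ := fun t => Function.invFunOn f (Set.Icc 0 1) (spiralMap φ t) with hψdef
  have hfψ : ∀ t, 2 * Real.pi ≤ t → f (ψ t) = spiralMap φ t := by
    intro t ht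
    obtain ⟨a, ha, hfa⟩ := hmem t ht
    exact Function.invFunOn_eq ⟨a, ha, hfa⟩
  have hψmem : ∀ t, 2 * Real.pi ≤ t → ψ t ∈ Set.Icc (0:ℝ) 1 := by
    intro t ht
    obtain ⟨a, ha, hfa⟩ := hmem t ht
    exact Function.invFunOn_mem ⟨a, ha, hfa⟩
  have hψc : ContinuousOn ψ (Set.Ici (2 * Real.pi)) :=
    hinvc.comp hsmc fun t ht => hmem t ht
  have hψinj : Set.InjOn ψ (Set.Ici (2 * Real.pi)) := by
    intro u hu v hv h
    apply harc hu hv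
    rw [← hfψ u hu, ← hfψ v hv, h]
  have hdich := icc_dichotomy hψc hψinj
  -- the sequence a and the interval lengths d
  set a : ℕ → ℝ := fun k => ψ (2 * Real.pi * ((k : ℝ) + 1)) with hadef
  have hange : ∀ k : ℕ, 2 * Real.pi ≤ 2 * Real.pi * ((k : ℝ) + 1) := by
    intro k
    have : (0:ℝ) ≤ (k : ℝ) := Nat.cast_nonneg k
    nlinarith
  have haK : ∀ k, a k ∈ Set.Icc (0:ℝ) 1 := fun k => hψmem _ (hange k)
  set d : ℕ → ℝ := fun n => |a n - a (n + 2)| with hddef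
  have hdsum : ∀ N, ∑ n ∈ Finset.range N, d n ≤ 2 := by
    intro N
    rcases hdich with hmono | hanti
    · have h1 : ∀ n : ℕ, d n = a (n + 2) - a n := by
        intro n
        have h2 : a n ≤ a (n + 2) := by
          apply hmono _ _ (hange n)
          have : (0:ℝ) ≤ (n : ℝ) := Nat.cast_nonneg n
          push_cast
          nlinarith
        simp only [hddef]
        rw [abs_sub_comm, abs_of_nonneg (by linarith)]
      calc ∑ n ∈ Finset.range N, d n = ∑ n ∈ Finset.range N, (a (n + 2) - a n) :=
            Finset.sum_congr rfl fun n _ => h1 n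
        _ = a N + a (N + 1) - a 0 - a 1 := sum_sub_shift a N
        _ ≤ 2 := by
            have := (haK N).2; have := (haK (N + 1)).2
            have := (haK 0).1; have := (haK 1).1
            linarith
    · have h1 : ∀ n : ℕ, d n = (fun k => -a k) (n + 2) - (fun k => -a k) n := by
        intro n
        have h2 : a (n + 2) ≤ a n := by
          apply hanti _ _ (hange n)
          have : (0:ℝ) ≤ (n : ℝ) := Nat.cast_nonneg n
          push_cast
          nlinarith
        simp only [hddef]
        rw [abs_of_nonneg (by linarith)]
        ring
      calc ∑ n ∈ Finset.range N, d n
          = ∑ n ∈ Finset.range N, ((fun k => -a k) (n + 2) - (fun k => -a k) n) :=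
            Finset.sum_congr rfl fun n _ => h1 n
        _ = -a N + -a (N + 1) - -a 0 - -a 1 := sum_sub_shift (fun k => -a k) N
        _ ≤ 2 := by
            have := (haK N).1; have := (haK (N + 1)).1
            have := (haK 0).2; have := (haK 1).2
            linarith
  -- key estimate
  have hkey : ∀ n : ℕ, 0 ≤ phiMax φ (n + 1) ∧ phiMax φ (n + 1) ^ s ≤ H ^ s * d n := by
    intro n
    have hnn : (0:ℝ) ≤ (n : ℝ) := Nat.cast_nonneg n
    have hIcc_sub : Set.Icc (2 * Real.pi * ((n + 1 : ℕ) : ℝ))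
        (2 * Real.pi * (((n + 1 : ℕ) : ℝ) + 1)) ⊆ Set.Ici (2 * Real.pi) := by
      intro x hx
      have := hx.1
      simp only [Set.mem_Ici]
      push_cast at this
      nlinarith
    have hne : (Set.Icc (2 * Real.pi * ((n + 1 : ℕ) : ℝ))
        (2 * Real.pi * (((n + 1 : ℕ) : ℝ) + 1))).Nonempty := by
      refine ⟨2 * Real.pi * ((n + 1 : ℕ) : ℝ), Set.left_mem_Icc.2 ?_⟩
      push_cast
      nlinarith
    obtain ⟨t, htmem, htmax⟩ := isCompact_Icc.exists_sSup_image_eq hne (hcont.mono hIcc_sub)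
    have hphimax : phiMax φ (n + 1) = φ t := htmax
    have ht2π : 2 * Real.pi ≤ t := hIcc_sub htmem
    have ht2π' : 2 * Real.pi ≤ t + Real.pi := by linarith
    have htlo : 2 * Real.pi * ((n : ℝ) + 1) ≤ t := by
      have := htmem.1; push_cast at this; linarith
    have hthi : t ≤ 2 * Real.pi * ((n : ℝ) + 2) := by
      have := htmem.2; push_cast at this; linarith
    have hφt := hpos t ht2π
    have hφt' := hpos _ ht2π'
    -- the distance computation
    have hdist : ‖spiralMap φ t - spiralMap φ (t + Real.pi)‖ = φ t + φ (t + Real.pi) := by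
      have heq : spiralMap φ t - spiralMap φ (t + Real.pi)
          = ((φ t + φ (t + Real.pi) : ℝ) : ℂ) * Complex.exp ((t : ℂ) * Complex.I) := by
        simp only [spiralMap]
        push_cast
        rw [add_mul, Complex.exp_add, Complex.exp_pi_mul_I]
        ring
      rw [heq, norm_mul, Complex.norm_exp_ofReal_mul_I, mul_one, Complex.norm_real, Real.norm_eq_abs,
        abs_of_nonneg (by linarith)]
    -- Hölder estimate
    have hxK := hψmem t ht2π
    have hyK := hψmem _ ht2π'
    have hb : φ t ≤ H * |ψ t - ψ (t + Real.pi)| ^ (1 / s) := by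
      have h1 := hHold (ψ t) hxK (ψ (t + Real.pi)) hyK
      rw [hfψ t ht2π, hfψ _ ht2π', hdist] at h1
      linarith
    -- |ψ t - ψ (t+π)| ≤ d n
    have ha_n : a n = ψ (2 * Real.pi * ((n : ℝ) + 1)) := rfl
    have ha_n2 : a (n + 2) = ψ (2 * Real.pi * ((n : ℝ) + 3)) := by
      simp only [hadef]
      push_cast
      ring_nf
    have hLU : 2 * Real.pi * ((n : ℝ) + 1) ≤ 2 * Real.pi * ((n : ℝ) + 3) := by nlinarith
    have hbd : |ψ t - ψ (t + Real.pi)| ≤ d n := by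
      have htpi_hi : t + Real.pi ≤ 2 * Real.pi * ((n : ℝ) + 3) := by nlinarith
      have hthi3 : t ≤ 2 * Real.pi * ((n : ℝ) + 3) := by nlinarith
      rcases hdich with hmono | hanti
      · have e1 : ψ (2 * Real.pi * ((n : ℝ) + 1)) ≤ ψ t := hmono _ _ (hange n) htlo
        have e2 : ψ t ≤ ψ (2 * Real.pi * ((n : ℝ) + 3)) := hmono _ _ ht2π hthi3
        have e3 : ψ (2 * Real.pi * ((n : ℝ) + 1)) ≤ ψ (t + Real.pi) :=
          hmono _ _ (hange n) (by linarith)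
        have e4 : ψ (t + Real.pi) ≤ ψ (2 * Real.pi * ((n : ℝ) + 3)) :=
          hmono _ _ ht2π' htpi_hi
        have hdn : d n = ψ (2 * Real.pi * ((n : ℝ) + 3)) - ψ (2 * Real.pi * ((n : ℝ) + 1)) := by
          simp only [hddef]
          rw [ha_n, ha_n2, abs_sub_comm, abs_of_nonneg (by linarith)]
        rw [hdn]
        rw [abs_sub_le_iff]
        constructor <;> linarith
      · have e1 : ψ t ≤ ψ (2 * Real.pi * ((n : ℝ) + 1)) := hanti _ _ (hange n) htlo
        have e2 : ψ (2 * Real.pi * ((n : ℝ) + 3)) ≤ ψ t := hanti _ _ ht2π hthi3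
        have e3 : ψ (t + Real.pi) ≤ ψ (2 * Real.pi * ((n : ℝ) + 1)) :=
          hanti _ _ (hange n) (by linarith)
        have e4 : ψ (2 * Real.pi * ((n : ℝ) + 3)) ≤ ψ (t + Real.pi) :=
          hanti _ _ ht2π' htpi_hi
        have hdn : d n = ψ (2 * Real.pi * ((n : ℝ) + 1)) - ψ (2 * Real.pi * ((n : ℝ) + 3)) := by
          simp only [hddef]
          rw [ha_n, ha_n2, abs_of_nonneg (by linarith)]
        rw [hdn]
        rw [abs_sub_le_iff]
        constructor <;> linarith
    have hdn0 : 0 ≤ d n := abs_nonneg _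
    have hb2 : φ t ≤ H * d n ^ (1 / s) :=
      hb.trans (mul_le_mul_of_nonneg_left
        (Real.rpow_le_rpow (abs_nonneg _) hbd hs1.le) hH.le)
    constructor
    · rw [hphimax]; exact hφt.le
    · rw [hphimax]
      calc φ t ^ s ≤ (H * d n ^ (1 / s)) ^ s := Real.rpow_le_rpow hφt.le hb2 hs0.le
        _ = H ^ s * (d n ^ (1 / s)) ^ s :=
            Real.mul_rpow hH.le (Real.rpow_nonneg hdn0 _)
        _ = H ^ s * d n := by
            rw [← Real.rpow_mul hdn0, one_div_mul_cancel (ne_of_gt hs0), Real.rpow_one]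
  -- conclude
  apply summable_of_sum_range_le (c := H ^ s * 2)
  · intro n
    exact Real.rpow_nonneg (hkey n).1 s
  · intro N
    calc ∑ n ∈ Finset.range N, phiMax φ (n + 1) ^ s
        ≤ ∑ n ∈ Finset.range N, H ^ s * d n := Finset.sum_le_sum fun n _ => (hkey n).2
      _ = H ^ s * ∑ n ∈ Finset.range N, d n := (Finset.mul_sum _ _ _).symm
      _ ≤ H ^ s * 2 := mul_le_mul_of_nonneg_left (hdsum N) (Real.rpow_nonneg hH.le s)
end

section
/- Let 0 < r ≤ p ≤ 1. The map f : ℂ → ℂ defined by f(z) = |z|^{(r/p)−1} z for z ≠ 0 and f(0) = 0 is (r/p)-Hölder on ℂ (there is C > 0 with |f(z) − f(w)| ≤ C|z − w|^{r/p} for all z, w ∈ ℂ) and maps S_p onto S_r, i.e., f(S_p) = S_r. In particular, there exists a surjective (r/p)-Hölder map from S_p onto S_r. -/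
/-- The polynomial spiral `S_p = {t^{-p} e^{it} : t ∈ [2π, ∞)} ∪ {0}`. -/
noncomputable def polySpiral (p : ℝ) : Set ℂ :=
  spiral (fun t => t ^ (-p))

lemma abs_stretch (α : ℝ) (hα0 : 0 < α) (z : ℂ) :
    ‖(‖z‖ ^ (α - 1) : ℝ) * z‖ = ‖z‖ ^ α := by
  rcases eq_or_ne z 0 with rfl | hz
  · simp [Real.zero_rpow hα0.ne']
  · have hz0 : 0 < ‖z‖ := norm_pos_iff.mpr hz
    rw [norm_mul, Complex.norm_real, Real.norm_eq_abs, abs_of_nonneg (Real.rpow_nonneg hz0.le _),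
      ← Real.rpow_add_one hz0.ne']
    ring_nf

lemma stretch_holder (α : ℝ) (hα0 : 0 < α) (hα1 : α ≤ 1) (z w : ℂ)
    (hle : ‖w‖ ≤ ‖z‖) :
    ‖(‖z‖ ^ (α - 1) : ℝ) * z - (‖w‖ ^ (α - 1) : ℝ) * w‖
      ≤ 2 * ‖z - w‖ ^ α := by
  set a := ‖z‖ with ha
  set b := ‖w‖ with hb
  set d := ‖z - w‖ with hd
  have hb0 : 0 ≤ b := norm_nonneg _
  have hd0 : 0 ≤ d := norm_nonneg _
  by_cases hcase : a ≤ d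
  · calc ‖(a ^ (α - 1) : ℝ) * z - (b ^ (α - 1) : ℝ) * w‖
        ≤ ‖(a ^ (α - 1) : ℝ) * z‖ + ‖(b ^ (α - 1) : ℝ) * w‖ :=
          norm_sub_le _ _
      _ = a ^ α + b ^ α := by rw [abs_stretch α hα0 z, abs_stretch α hα0 w]
      _ ≤ d ^ α + d ^ α :=
          add_le_add (Real.rpow_le_rpow (hb0.trans hle) hcase hα0.le)
            (Real.rpow_le_rpow hb0 (hle.trans hcase) hα0.le)
      _ = 2 * d ^ α := by ring
  · push_neg at hcase
    have ha0 : 0 < a := lt_of_le_of_lt hd0 hcase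
    rcases eq_or_lt_of_le hd0 with hdz | hd0'
    · -- z = w
      obtain rfl : z = w := sub_eq_zero.mp (norm_eq_zero.mp hdz.symm)
      simp [ha, hb, hd, sub_self, Real.zero_rpow hα0.ne']
    · rcases eq_or_lt_of_le hb0 with hbz | hb0'
      · -- w = 0, then d = a, contradicting d < a
        have hw : w = 0 := norm_eq_zero.mp hbz.symm
        have : d = a := by rw [hd, hw, sub_zero, ha]
        exact absurd this (by linarith)
      · -- main case: 0 < d < a, 0 < b ≤ a
        have key : ((a ^ (α - 1) : ℝ) : ℂ) * z - ((b ^ (α - 1) : ℝ) : ℂ) * w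
            = ((a ^ (α - 1) : ℝ) : ℂ) * (z - w)
              + (((a ^ (α - 1) - b ^ (α - 1) : ℝ)) : ℂ) * w := by
          push_cast; ring
        have hAle : a ^ (α - 1) ≤ d ^ (α - 1) :=
          Real.rpow_le_rpow_of_nonpos hd0' hcase.le (by linarith)
        have hAB : a ^ (α - 1) ≤ b ^ (α - 1) :=
          Real.rpow_le_rpow_of_nonpos hb0' hle (by linarith)
        have hab : a - b ≤ d := by
          have h := norm_sub_norm_le z w
          rw [ha, hb, hd]; exact h
        have hbaα : b ^ α ≤ a ^ α := Real.rpow_le_rpow hb0 hle hα0.le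
        have hA : a ^ (α - 1) * a = a ^ α := by
          rw [← Real.rpow_add_one ha0.ne']; ring_nf
        have hD : d ^ (α - 1) * d = d ^ α := by
          rw [← Real.rpow_add_one hd0'.ne']; ring_nf
        have hB : b ^ (α - 1) * b = b ^ α := by
          rw [← Real.rpow_add_one hb0'.ne']; ring_nf
        have hA0 : 0 ≤ a ^ (α - 1) := Real.rpow_nonneg ha0.le _
        calc ‖((a ^ (α - 1) : ℝ) : ℂ) * z - ((b ^ (α - 1) : ℝ) : ℂ) * w‖
            ≤ ‖((a ^ (α - 1) : ℝ) : ℂ) * (z - w)‖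
              + ‖(((a ^ (α - 1) - b ^ (α - 1) : ℝ)) : ℂ) * w‖ := by
              rw [key]; exact norm_add_le _ _
          _ = a ^ (α - 1) * d + (b ^ (α - 1) - a ^ (α - 1)) * b := by
              rw [norm_mul, norm_mul, Complex.norm_real, Complex.norm_real, Real.norm_eq_abs, Real.norm_eq_abs,
                abs_of_nonneg hA0, abs_of_nonpos (by linarith), ← hb, ← hd]
              ring
          _ ≤ 2 * d ^ α := by
              have h1 : a ^ (α - 1) * d ≤ d ^ α := by
                rw [← hD]; exact mul_le_mul_of_nonneg_right hAle hd0
              have h2 : (b ^ (α - 1) - a ^ (α - 1)) * b ≤ d ^ α := by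
                have : (b ^ (α - 1) - a ^ (α - 1)) * b = b ^ α - a ^ (α - 1) * b := by
                  rw [← hB]; ring
                rw [this]
                have h3 : b ^ α - a ^ (α - 1) * b ≤ a ^ (α - 1) * (a - b) := by
                  nlinarith [hA]
                have h4 : a ^ (α - 1) * (a - b) ≤ a ^ (α - 1) * d :=
                  mul_le_mul_of_nonneg_left hab hA0
                have h5 : a ^ (α - 1) * d ≤ d ^ α := by
                  rw [← hD]; exact mul_le_mul_of_nonneg_right hAle hd0
                linarith
              linarith

lemma abs_spiralMap (q t : ℝ) (ht : 0 < t) :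
    ‖spiralMap (fun s => s ^ (-q)) t‖ = t ^ (-q) := by
  unfold spiralMap
  rw [norm_mul, Complex.norm_exp, Complex.norm_real]
  simp [abs_of_nonneg (Real.rpow_nonneg ht.le _)]

/-- For `0 < r ≤ p ≤ 1`, the radial stretch `f(z) = |z|^{r/p - 1} z`, `f(0) = 0`,
is `(r/p)`-Hölder on `ℂ` and maps `S_p` onto `S_r`. -/
theorem radialStretch_holder_maps_polySpiral (p r : ℝ) (hr : 0 < r) (hrp : r ≤ p) (hp : p ≤ 1)
    (f : ℂ → ℂ) (hf0 : f 0 = 0)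
    (hf : ∀ z : ℂ, z ≠ 0 → f z = (‖z‖ ^ (r / p - 1) : ℝ) * z) :
    (∃ C > 0, ∀ z w : ℂ, ‖f z - f w‖ ≤ C * ‖z - w‖ ^ (r / p)) ∧
      f '' polySpiral p = polySpiral r := by
  have hp0 : 0 < p := hr.trans_le hrp
  set α := r / p with hα
  have hα0 : 0 < α := div_pos hr hp0
  have hα1 : α ≤ 1 := (div_le_one hp0).mpr hrp
  -- f agrees with the stretch everywhere
  have hfe : ∀ z : ℂ, f z = (‖z‖ ^ (α - 1) : ℝ) * z := by
    intro z
    rcases eq_or_ne z 0 with rfl | hz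
    · simp [hf0]
    · exact hf z hz
  constructor
  · refine ⟨2, two_pos, fun z w => ?_⟩
    rw [hfe z, hfe w]
    rcases le_total ‖w‖ ‖z‖ with h | h
    · exact stretch_holder α hα0 hα1 z w h
    · have := stretch_holder α hα0 hα1 w z h
      rwa [norm_sub_rev _ ((‖z‖ ^ (α - 1) : ℝ) * z : ℂ), norm_sub_rev w z] at this
  · -- image of the spiral
    unfold polySpiral spiral
    rw [Set.image_union, Set.image_singleton, hf0]
    congr 1
    rw [Set.image_image]
    apply Set.image_congr
    intro t ht
    have ht0 : 0 < t := lt_of_lt_of_le (by positivity) ht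
    have habs : ‖spiralMap (fun s => s ^ (-p)) t‖ = t ^ (-p) :=
      abs_spiralMap p t ht0
    have hne : spiralMap (fun s => s ^ (-p)) t ≠ 0 := by
      intro h
      rw [h, norm_zero] at habs
      exact absurd habs.symm (ne_of_gt (Real.rpow_pos_of_pos ht0 _))
    rw [hf _ hne, habs]
    unfold spiralMap
    rw [← mul_assoc, ← Complex.ofReal_mul]
    congr 2
    rw [← Real.rpow_add_one (ne_of_gt (Real.rpow_pos_of_pos ht0 _)) (α - 1)]
    rw [show α - 1 + 1 = α by ring, ← Real.rpow_mul ht0.le]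
    congr 1
    rw [hα]
    field_simp
end

section
/- Let 0 < r ≤ p ≤ 1 and α ∈ (0, 1]. If h : S_p → S_r is a surjective α-Hölder map, i.e., there is C > 0 with |h(z) − h(w)| ≤ C|z − w|^α for all z, w ∈ S_p and h(S_p) = S_r, then α ≤ r/p. -/
open Real Set Filter

lemma spiral_abs (e t : ℝ) (ht : 0 < t) :
    ‖spiralMap (fun s => s ^ (-e)) t‖ = t ^ (-e) := by
  unfold spiralMap
  rw [norm_mul, Complex.norm_real, Complex.norm_exp]
  simp [abs_of_nonneg (Real.rpow_nonneg ht.le _)]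

lemma spiral_mem (e t : ℝ) (ht : 2 * Real.pi ≤ t) :
    spiralMap (fun s => s ^ (-e)) t ∈ polySpiral e :=
  Or.inl ⟨t, ht, rfl⟩

lemma rpow_neg_anti {e x y : ℝ} (he : 0 < e) (hx : 0 < x) (hxy : x ≤ y) :
    y ^ (-e) ≤ x ^ (-e) := by
  rw [Real.rpow_neg hx.le, Real.rpow_neg (hx.trans_le hxy).le]
  exact inv_anti₀ (Real.rpow_pos_of_pos hx e)
    (Real.rpow_le_rpow hx.le hxy he.le)

lemma rpow_neg_strict_anti {e x y : ℝ} (he : 0 < e) (hx : 0 < x) (hxy : x < y) :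
    y ^ (-e) < x ^ (-e) := by
  rw [Real.rpow_neg hx.le, Real.rpow_neg (hx.trans hxy).le]
  exact inv_strictAnti₀ (Real.rpow_pos_of_pos hx e)
    (Real.rpow_lt_rpow hx.le hxy he)

lemma polySpiral_eq_of_abs {e : ℝ} (he : 0 < e) {w : ℂ} (hw : w ∈ polySpiral e)
    {s : ℝ} (hs : 2 * Real.pi ≤ s) (habs : ‖w‖ = s ^ (-e)) :
    w = spiralMap (fun t => t ^ (-e)) s := by
  have hs0 : 0 < s := lt_of_lt_of_le Real.two_pi_pos hs
  rcases hw with ⟨t, ht, rfl⟩ | hw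
  · have ht0 : 0 < t := lt_of_lt_of_le Real.two_pi_pos ht
    rw [spiral_abs e t ht0] at habs
    have : t = s := by
      have h1 : ((t : ℝ) ^ (-e)) ^ (-e)⁻¹ = (s ^ (-e)) ^ (-e)⁻¹ := by rw [habs]
      rwa [Real.rpow_rpow_inv ht0.le (neg_ne_zero.mpr he.ne'),
        Real.rpow_rpow_inv hs0.le (neg_ne_zero.mpr he.ne')] at h1
    rw [this]
  · simp only [Set.mem_singleton_iff] at hw
    subst hw
    rw [norm_zero] at habs
    exact absurd habs.symm (ne_of_gt (Real.rpow_pos_of_pos hs0 _))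

noncomputable def spiralD (e : ℝ) : ℝ → ℂ := fun t =>
  ((-e * t ^ (-e - 1) : ℝ) : ℂ) * Complex.exp (t * Complex.I)
    + ((t ^ (-e) : ℝ) : ℂ) * (Complex.exp (t * Complex.I) * Complex.I)

lemma spiral_hasDerivAt (e : ℝ) (t : ℝ) (ht : 0 < t) :
    HasDerivAt (spiralMap (fun s => s ^ (-e))) (spiralD e t) t := by
  have h1 : HasDerivAt (fun s : ℝ => s ^ (-e)) (-e * t ^ (-e - 1)) t :=
    Real.hasDerivAt_rpow_const (Or.inl ht.ne')
  have h2 : HasDerivAt (fun s : ℝ => ((s ^ (-e) : ℝ) : ℂ)) ((-e * t ^ (-e - 1) : ℝ) : ℂ) t :=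
    h1.ofReal_comp
  have h3' : HasDerivAt (fun w : ℂ => Complex.exp (w * Complex.I))
      (Complex.exp ((t : ℂ) * Complex.I) * Complex.I) (t : ℂ) := by
    simpa using ((hasDerivAt_id ((t : ℝ) : ℂ)).mul_const Complex.I).cexp
  have h3 : HasDerivAt (fun s : ℝ => Complex.exp ((s : ℂ) * Complex.I))
      (Complex.exp ((t : ℂ) * Complex.I) * Complex.I) t := h3'.comp_ofReal
  exact h2.mul h3

lemma norm_exp_mul_I (t : ℝ) : ‖Complex.exp ((t : ℂ) * Complex.I)‖ = 1 := by
  rw [Complex.norm_exp]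
  simp

lemma spiralD_norm_le (e q t : ℝ) (he0 : 0 < e) (he1 : e ≤ 1) (hqe : q ≤ e)
    (ht : 2 * Real.pi ≤ t) : ‖spiralD e t‖ ≤ 2 * t ^ (-q) := by
  have ht1 : (1 : ℝ) ≤ t := by
    have := Real.two_pi_pos
    nlinarith [Real.pi_gt_three]
  have ht0 : 0 < t := lt_of_lt_of_le one_pos ht1
  have hb1 : ‖((-e * t ^ (-e - 1) : ℝ) : ℂ) * Complex.exp ((t : ℂ) * Complex.I)‖
      = e * t ^ (-e - 1) := by
    rw [norm_mul, norm_exp_mul_I, Complex.norm_real, mul_one, Real.norm_eq_abs, abs_mul,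
      abs_neg, abs_of_pos he0, abs_of_pos (Real.rpow_pos_of_pos ht0 _)]
  have hb2 : ‖((t ^ (-e) : ℝ) : ℂ) * (Complex.exp ((t : ℂ) * Complex.I) * Complex.I)‖
      = t ^ (-e) := by
    rw [norm_mul, norm_mul, norm_exp_mul_I, Complex.norm_real, Complex.norm_I, one_mul, mul_one,
      Real.norm_eq_abs, abs_of_pos (Real.rpow_pos_of_pos ht0 _)]
  have key1 : e * t ^ (-e - 1) ≤ t ^ (-e) := by
    have h1 : t ^ (-e - 1) = t ^ (-e) * t⁻¹ := by
      rw [← Real.rpow_neg_one t, ← Real.rpow_add ht0]; ring_nf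
    rw [h1]
    have : e * (t ^ (-e) * t⁻¹) ≤ 1 * (t ^ (-e) * 1) := by
      apply mul_le_mul he1 _ (by positivity) one_pos.le
      apply mul_le_mul le_rfl _ (by positivity) (Real.rpow_pos_of_pos ht0 _).le
      exact inv_le_one_of_one_le₀ ht1
    linarith
  have key2 : t ^ (-e) ≤ t ^ (-q) :=
    Real.rpow_le_rpow_of_exponent_le ht1 (by linarith)
  calc ‖spiralD e t‖ ≤ e * t ^ (-e - 1) + t ^ (-e) := by
        rw [← hb1, ← hb2]; exact norm_add_le _ _
    _ ≤ t ^ (-q) + t ^ (-q) := by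
        have := key1.trans key2
        linarith
    _ = 2 * t ^ (-q) := by ring

lemma spiral_chord (e q : ℝ) (he0 : 0 < e) (he1 : e ≤ 1) (hqe : q ≤ e)
    (hq1 : q < 1) {a b : ℝ} (ha : 2 * Real.pi ≤ a) (hab : a ≤ b) :
    ‖spiralMap (fun s => s ^ (-e)) b - spiralMap (fun s => s ^ (-e)) a‖
      ≤ (2 / (1 - q)) * b ^ (1 - q) - (2 / (1 - q)) * a ^ (1 - q) := by
  set z := spiralMap (fun s => s ^ (-e)) with hzdef
  have hpos : ∀ x ∈ Icc a b, (0 : ℝ) < x := fun x hx =>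
    lt_of_lt_of_le Real.two_pi_pos (ha.trans hx.1)
  have hF : ∀ x : ℝ, 0 < x → HasDerivAt (fun y : ℝ => (2 / (1 - q)) * y ^ (1 - q) -
      (2 / (1 - q)) * a ^ (1 - q)) (2 * x ^ (-q)) x := by
    intro x hx
    have h1 : HasDerivAt (fun y : ℝ => y ^ (1 - q)) ((1 - q) * x ^ (1 - q - 1)) x :=
      Real.hasDerivAt_rpow_const (Or.inl hx.ne')
    have h2 := (h1.const_mul (2 / (1 - q))).sub_const ((2 / (1 - q)) * a ^ (1 - q))
    have hne : (1 : ℝ) - q ≠ 0 := by linarith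
    have e1 : (2 / (1 - q)) * ((1 - q) * x ^ (1 - q - 1)) = 2 * x ^ (-q) := by
      have h3 : (1 : ℝ) - q - 1 = -q := by ring
      rw [h3, ← mul_assoc, div_mul_cancel₀ 2 hne]
    rwa [e1] at h2
  have key := image_norm_le_of_norm_deriv_right_le_deriv_boundary'
    (f := fun x => z x - z a) (f' := spiralD e)
    (a := a) (b := b)
    (B := fun x => (2 / (1 - q)) * x ^ (1 - q) - (2 / (1 - q)) * a ^ (1 - q))
    (B' := fun x => 2 * x ^ (-q))
    (fun x hx => ((spiral_hasDerivAt e x (hpos x hx)).sub_const (z a)).continuousAt.continuousWithinAt)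
    (fun x hx => ((spiral_hasDerivAt e x (hpos x (Ico_subset_Icc_self hx))).sub_const
      (z a)).hasDerivWithinAt)
    (by simp)
    (fun x hx => (hF x (hpos x hx)).continuousAt.continuousWithinAt)
    (fun x hx => (hF x (hpos x (Ico_subset_Icc_self hx))).hasDerivWithinAt)
    (fun x hx => spiralD_norm_le e q x he0 he1 hqe (ha.trans hx.1))
  exact key (right_mem_Icc.mpr hab)

lemma exp_pi_nat (n : ℕ) :
    Complex.exp ((↑(Real.pi * ((n : ℝ) + 1)) : ℂ) * Complex.I) = (-1) ^ (n + 1) := by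
  have h : ((Real.pi * ((n : ℝ) + 1) : ℝ) : ℂ) * Complex.I
      = ((n + 1 : ℕ) : ℂ) * ((Real.pi : ℂ) * Complex.I) := by push_cast; ring
  rw [h, Complex.exp_nat_mul, Complex.exp_pi_mul_I]

lemma spiral_w_dist (e : ℝ) (j : ℕ) :
    ‖spiralMap (fun t => t ^ (-e)) (Real.pi * ((j : ℝ) + 1))
      - spiralMap (fun t => t ^ (-e)) (Real.pi * (((j + 1 : ℕ) : ℝ) + 1))‖
      = (Real.pi * ((j : ℝ) + 1)) ^ (-e) + (Real.pi * (((j + 1 : ℕ) : ℝ) + 1)) ^ (-e) := by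
  have hpj : (0:ℝ) < Real.pi * ((j : ℝ) + 1) := by positivity
  have hpj2 : (0:ℝ) < Real.pi * (((j + 1 : ℕ) : ℝ) + 1) := by positivity
  set a := (Real.pi * ((j : ℝ) + 1)) ^ (-e) with hadef
  set b := (Real.pi * (((j + 1 : ℕ) : ℝ) + 1)) ^ (-e) with hbdef
  have ha : 0 < a := Real.rpow_pos_of_pos hpj _
  have hb : 0 < b := Real.rpow_pos_of_pos hpj2 _
  unfold spiralMap
  rw [exp_pi_nat j, exp_pi_nat (j + 1)]
  have : ((a : ℂ) * (-1) ^ (j + 1) - (b : ℂ) * (-1) ^ (j + 1 + 1))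
      = ((a : ℂ) + (b : ℂ)) * (-1) ^ (j + 1) := by
    rw [pow_succ]
    ring
  rw [this, norm_mul, norm_pow]
  simp only [norm_neg, norm_one, one_pow, mul_one]
  rw [← Complex.ofReal_add, Complex.norm_real, Real.norm_eq_abs, abs_of_pos (by linarith)]

lemma m_contOn (p α C : ℝ) (hα : 0 < α) (h : ℂ → ℂ)
    (hHol : ∀ z ∈ polySpiral p, ∀ w ∈ polySpiral p,
      ‖h z - h w‖ ≤ C * ‖z - w‖ ^ α) :
    ContinuousOn (fun t => ‖h (spiralMap (fun s => s ^ (-p)) t)‖)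
      (Ici (2 * Real.pi)) := by
  intro t0 ht0
  set z := spiralMap (fun s => s ^ (-p)) with hzdef
  have ht00 : (0:ℝ) < t0 := lt_of_lt_of_le Real.two_pi_pos ht0
  have hzc : ContinuousAt z t0 := by
    apply ContinuousAt.mul
    · exact Complex.continuous_ofReal.continuousAt.comp
        (Real.continuousAt_rpow_const t0 (-p) (Or.inl ht00.ne'))
    · exact (Complex.continuous_ofReal.mul continuous_const).cexp.continuousAt
  have hz0 : Tendsto (fun t => ‖z t - z t0‖) (nhdsWithin t0 (Ici (2 * Real.pi)))
      (nhds 0) := by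
    have h4 : Tendsto (fun t => z t - z t0) (nhdsWithin t0 (Ici (2 * Real.pi))) (nhds 0) := by
      have h2 : ContinuousAt (fun t => z t - z t0) t0 := hzc.sub continuousAt_const
      have h3 := h2.continuousWithinAt (s := Ici (2 * Real.pi))
      simpa [ContinuousWithinAt] using h3
    simpa [Function.comp_def] using (continuous_norm.tendsto 0).comp h4
  have hg : Tendsto (fun t => C * ‖z t - z t0‖ ^ α)
      (nhdsWithin t0 (Ici (2 * Real.pi))) (nhds 0) := by
    have h1 : Tendsto (fun t => ‖z t - z t0‖ ^ α)
        (nhdsWithin t0 (Ici (2 * Real.pi))) (nhds 0) := by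
      have := (Real.continuousAt_rpow_const 0 α (Or.inr hα.le)).tendsto.comp hz0
      simpa [Real.zero_rpow hα.ne', Function.comp_def] using this
    simpa using h1.const_mul C
  have hsq : Tendsto (fun t => ‖h (z t)‖ - ‖h (z t0)‖)
      (nhdsWithin t0 (Ici (2 * Real.pi))) (nhds 0) := by
    apply squeeze_zero_norm' _ hg
    filter_upwards [self_mem_nhdsWithin] with t ht
    calc ‖‖h (z t)‖ - ‖h (z t0)‖‖
        = |‖h (z t)‖ - ‖h (z t0)‖| := rfl
      _ ≤ ‖h (z t) - h (z t0)‖ := abs_norm_sub_norm_le _ _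
      _ ≤ C * ‖z t - z t0‖ ^ α := by
          apply hHol
          · exact Or.inl ⟨t, ht, rfl⟩
          · exact Or.inl ⟨t0, ht0, rfl⟩
  have := hsq.add_const (‖h (z t0)‖)
  simpa [ContinuousWithinAt] using this

set_option maxHeartbeats 2000000 in
/-- For `0 < r ≤ p ≤ 1`, every surjective `α`-Hölder map `h : S_p → S_r`
satisfies `α ≤ r / p`. -/
theorem holder_exponent_le_of_polySpiral_surjective (p r α : ℝ)
    (hr : 0 < r) (hrp : r ≤ p) (hp : p ≤ 1) (hα0 : 0 < α) (hα1 : α ≤ 1)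
    (h : ℂ → ℂ) (hsurj : h '' polySpiral p = polySpiral r)
    (C : ℝ) (hC : 0 < C)
    (hHol : ∀ z ∈ polySpiral p, ∀ w ∈ polySpiral p,
      ‖h z - h w‖ ≤ C * ‖z - w‖ ^ α) :
    α ≤ r / p := by
  by_contra hcon
  push_neg at hcon
  have hp0 : 0 < p := lt_of_lt_of_le hr hrp
  have hπ : (0:ℝ) < Real.pi := Real.pi_pos
  have h2π : (0:ℝ) < 2 * Real.pi := Real.two_pi_pos
  have hrpα : r < α * p := by
    rw [div_lt_iff₀ hp0] at hcon; linarith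
  set β : ℝ := r / α with hβdef
  have hβ0 : 0 < β := div_pos hr hα0
  have hβp : β < p := by
    rw [hβdef, div_lt_iff₀ hα0]; nlinarith
  have hβ1 : β < 1 := lt_of_lt_of_le hβp hp
  set q : ℝ := min p ((1 + β) / 2) with hqdef
  have hq0 : 0 < q := lt_min hp0 (by linarith)
  have hqp : q ≤ p := min_le_left _ _
  have hq1 : q < 1 := lt_of_le_of_lt (min_le_right _ _) (by linarith)
  set γ : ℝ := r / (p * α) with hγdef
  have hγ0 : 0 < γ := div_pos hr (by positivity)
  have hkey : γ * (1 - q) + β < 1 := by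
    have hpα : (0:ℝ) < p * α := by positivity
    have e1 : γ * (1 - q) + β = (r * (1 - q) + r * p) / (p * α) := by
      rw [hγdef, hβdef]
      field_simp
    rw [e1, div_lt_one hpα]
    rcases min_cases p ((1 + β) / 2) with ⟨hqe, hle⟩ | ⟨hqe, hle⟩
    · rw [hqdef, hqe]
      nlinarith
    · rw [hqdef, hqe]
      have h1 : r * (1 - (1 + β) / 2) = r * (1 - β) / 2 := by ring
      rw [h1]
      have hrαβ : r = α * β := by rw [hβdef]; field_simp
      nlinarith [hrαβ, mul_pos hα0 (mul_pos (sub_pos.mpr hβ1) (by linarith : (0:ℝ) < p - β/2))]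
  -- basic objects
  set z : ℝ → ℂ := spiralMap (fun s => s ^ (-p)) with hzdef
  set m : ℝ → ℝ := fun t => ‖h (z t)‖ with hmdef
  set L : ℕ → ℝ := fun j => (Real.pi * ((j : ℝ) + 1)) ^ (-r) with hLdef
  set w : ℕ → ℂ := fun j => spiralMap (fun t => t ^ (-r)) (Real.pi * ((j : ℝ) + 1)) with hwdef
  have hσpos : ∀ j : ℕ, (0:ℝ) < Real.pi * ((j : ℝ) + 1) := by
    intro j; positivity
  have hσ2π : ∀ j : ℕ, 1 ≤ j → 2 * Real.pi ≤ Real.pi * ((j : ℝ) + 1) := by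
    intro j hj
    have : (2:ℝ) ≤ (j : ℝ) + 1 := by
      have : (1:ℝ) ≤ (j : ℝ) := by exact_mod_cast hj
      linarith
    nlinarith
  have hLpos : ∀ j : ℕ, 0 < L j := fun j => Real.rpow_pos_of_pos (hσpos j) _
  have hLanti : ∀ i j : ℕ, i ≤ j → L j ≤ L i := by
    intro i j hij
    apply rpow_neg_anti hr (hσpos i)
    have : (i:ℝ) ≤ (j:ℝ) := by exact_mod_cast hij
    nlinarith
  have habsw : ∀ j : ℕ, ‖w j‖ = L j := fun j => spiral_abs r _ (hσpos j)
  have hwmem : ∀ j : ℕ, 1 ≤ j → w j ∈ polySpiral r := fun j hj => spiral_mem r _ (hσ2π j hj)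
  have hwd : ∀ j : ℕ, ‖w j - w (j+1)‖ = L j + L (j+1) := by
    intro j
    have := spiral_w_dist r j
    simpa [hwdef, hLdef] using this
  have hmem : ∀ t : ℝ, 2 * Real.pi ≤ t → z t ∈ polySpiral p := fun t ht => spiral_mem p t ht
  have himg : ∀ t : ℝ, 2 * Real.pi ≤ t → h (z t) ∈ polySpiral r := by
    intro t ht
    rw [← hsurj]
    exact Set.mem_image_of_mem h (hmem t ht)
  have hzabs : ∀ t : ℝ, 0 < t → ‖z t‖ = t ^ (-p) := fun t ht => spiral_abs p t ht
  have hmcont : ContinuousOn m (Ici (2 * Real.pi)) := m_contOn p α C hα0 h hHol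
  have hpoint : ∀ t : ℝ, ∀ j : ℕ, 2 * Real.pi ≤ t → 1 ≤ j → m t = L j → h (z t) = w j := by
    intro t j ht hj hm
    exact polySpiral_eq_of_abs hr (himg t ht) (hσ2π j hj) hm
  -- finding points with prescribed modulus in the image
  have hfind : ∀ j : ℕ, 1 ≤ j → ∃ t, 2 * Real.pi ≤ t ∧ (m t = L j ∨ m t = L (j+1)) := by
    intro j hj
    have hw1 : w j ∈ polySpiral r := hwmem j hj
    have hw2 : w (j+1) ∈ polySpiral r := hwmem (j+1) (by omega)
    rw [← hsurj] at hw1 hw2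
    obtain ⟨x1, hx1mem, hx1⟩ := hw1
    obtain ⟨x2, hx2mem, hx2⟩ := hw2
    have hne : x1 ≠ x2 := by
      intro hEq
      have h1 : ‖w j‖ = ‖w (j+1)‖ := by
        rw [← hx1, ← hx2, hEq]
      rw [habsw j, habsw (j+1)] at h1
      have hlt : L (j+1) < L j := by
        apply rpow_neg_strict_anti hr (hσpos j)
        push_cast
        nlinarith [hπ]
      exact absurd h1 (ne_of_gt hlt)
    rcases hx1mem with ⟨t, ht, hteq⟩ | h01
    · refine ⟨t, ht, Or.inl ?_⟩
      rw [hmdef]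
      show ‖h (z t)‖ = L j
      have : z t = x1 := hteq
      rw [this, hx1, habsw j]
    · rcases hx2mem with ⟨t, ht, hteq⟩ | h02
      · refine ⟨t, ht, Or.inr ?_⟩
        show ‖h (z t)‖ = L (j+1)
        have : z t = x2 := hteq
        rw [this, hx2, habsw (j+1)]
      · exfalso
        apply hne
        simp only [Set.mem_singleton_iff] at h01 h02
        rw [h01, h02]
  -- IVT steps
  have stepdec : ∀ t c : ℝ, ∀ j : ℕ, 2 * Real.pi ≤ t → t ≤ c → m c ≤ L j → L j ≤ m t →
      ∃ t', t ≤ t' ∧ t' ≤ c ∧ m t' = L j := by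
    intro t c j ht htc h1 h2
    have hsub : Icc t c ⊆ Ici (2 * Real.pi) := fun x hx => le_trans ht hx.1
    have := intermediate_value_Icc' htc (hmcont.mono hsub)
    obtain ⟨t', ht', hmt'⟩ := this (Set.mem_Icc.mpr ⟨h1, h2⟩)
    exact ⟨t', ht'.1, ht'.2, hmt'⟩
  have stepinc : ∀ t c : ℝ, ∀ j : ℕ, 2 * Real.pi ≤ t → t ≤ c → m t ≤ L j → L j ≤ m c →
      ∃ t', t ≤ t' ∧ t' ≤ c ∧ m t' = L j := by
    intro t c j ht htc h1 h2
    have hsub : Icc t c ⊆ Ici (2 * Real.pi) := fun x hx => le_trans ht hx.1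
    have := intermediate_value_Icc htc (hmcont.mono hsub)
    obtain ⟨t', ht', hmt'⟩ := this (Set.mem_Icc.mpr ⟨h1, h2⟩)
    exact ⟨t', ht'.1, ht'.2, hmt'⟩
  -- generic chain builder
  have hchain : ∀ (K : ℕ) (e t0 : ℝ) (lam : ℕ → ℕ), 2 * Real.pi ≤ t0 → t0 ≤ e →
      m t0 = L (lam 0) →
      (∀ k, k < K → ∀ t, 2 * Real.pi ≤ t → t ≤ e → m t = L (lam k) →
        ∃ t', t ≤ t' ∧ t' ≤ e ∧ m t' = L (lam (k+1))) →
      ∃ u : ℕ → ℝ, (∀ k, k ≤ K → 2 * Real.pi ≤ u k ∧ u k ≤ e ∧ m (u k) = L (lam k)) ∧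
        (∀ k, k < K → u k ≤ u (k+1)) := by
    intro K
    induction K with
    | zero =>
      intro e t0 lam h1 h2 h3 _
      refine ⟨fun _ => t0, ?_, ?_⟩
      · intro k hk
        interval_cases k
        exact ⟨h1, h2, h3⟩
      · intro k hk; omega
    | succ K ih =>
      intro e t0 lam h1 h2 h3 hstep
      obtain ⟨u, hu1, hu2⟩ := ih e t0 lam h1 h2 h3 (fun k hk => hstep k (by omega))
      obtain ⟨huK1, huK2, huK3⟩ := hu1 K le_rfl
      obtain ⟨t', ht'1, ht'2, ht'3⟩ := hstep K (by omega) (u K) huK1 huK2 huK3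
      refine ⟨fun n => if n = K + 1 then t' else u n, ?_, ?_⟩
      · intro k hk
        by_cases hkK : k = K + 1
        · subst hkK
          simp only [if_pos rfl]
          exact ⟨le_trans huK1 ht'1, ht'2, ht'3⟩
        · have hkK' : k ≤ K := by omega
          simp only [if_neg hkK]
          exact hu1 k hkK'
      · intro k hk
        by_cases hkK : k = K
        · simp only [if_neg (by omega : ¬ k = K + 1), if_pos (by omega : k + 1 = K + 1)]
          calc u k = u K := by rw [hkK]
            _ ≤ t' := ht'1
        · have h4 : k < K := by omega
          simp only [if_neg (by omega : ¬ k = K + 1), if_neg (by omega : ¬ k + 1 = K + 1)]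
          exact hu2 k h4
  -- the core quantitative estimate
  have hcore : ∀ (N K : ℕ) (u : ℕ → ℝ) (lam : ℕ → ℕ),
      (∀ k, k ≤ K + 1 → 2 * Real.pi ≤ u k) →
      (∀ k, k ≤ K → u k ≤ u (k+1)) →
      (∀ k, k ≤ K + 1 → 1 ≤ lam k ∧ lam k ≤ N) →
      (∀ k, k ≤ K → lam (k+1) = lam k + 1 ∨ lam k = lam (k+1) + 1) →
      (∀ k, k ≤ K + 1 → m (u k) = L (lam k)) →
      (K : ℝ) * (L N / C) ^ α⁻¹
        ≤ (2 / (1 - q)) * ((2 ^ α * C / L N) ^ (p * α)⁻¹) ^ (1 - q) := by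
    intro N K u lam hu2π humono hlam hadj hmu
    have hLN : 0 < L N := hLpos N
    have hupos : ∀ k, k ≤ K + 1 → (0:ℝ) < u k := fun k hk => lt_of_lt_of_le h2π (hu2π k hk)
    have himgd : ∀ k, k ≤ K →
        ‖h (z (u k)) - h (z (u (k+1)))‖ = L (lam k) + L (lam (k+1)) := by
      intro k hk
      have e1 : h (z (u k)) = w (lam k) :=
        hpoint _ _ (hu2π k (by omega)) (hlam k (by omega)).1 (hmu k (by omega))
      have e2 : h (z (u (k+1))) = w (lam (k+1)) :=
        hpoint _ _ (hu2π (k+1) (by omega)) (hlam (k+1) (by omega)).1 (hmu (k+1) (by omega))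
      rw [e1, e2]
      rcases hadj k hk with hcase | hcase
      · rw [hcase]
        exact hwd (lam k)
      · rw [hcase, norm_sub_rev, hwd (lam (k+1))]
        ring
    have himgdlow : ∀ k, k ≤ K → L N ≤ ‖h (z (u k)) - h (z (u (k+1)))‖ := by
      intro k hk
      rw [himgd k hk]
      have h1 : L N ≤ L (lam k) := hLanti (lam k) N (hlam k (by omega)).2
      have h2 : 0 < L (lam (k+1)) := hLpos _
      linarith
    have hHolk : ∀ k, k ≤ K → ‖h (z (u k)) - h (z (u (k+1)))‖
        ≤ C * ‖z (u k) - z (u (k+1))‖ ^ α := by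
      intro k hk
      exact hHol _ (hmem _ (hu2π k (by omega))) _ (hmem _ (hu2π (k+1) (by omega)))
    have chordlow : ∀ k, k ≤ K →
        (L N / C) ^ α⁻¹ ≤ ‖z (u k) - z (u (k+1))‖ := by
      intro k hk
      set d := ‖z (u k) - z (u (k+1))‖ with hddef
      have hd : 0 ≤ d := norm_nonneg _
      have h1 : L N / C ≤ d ^ α := by
        rw [div_le_iff₀ hC]
        calc L N ≤ C * d ^ α := le_trans (himgdlow k hk) (hHolk k hk)
          _ = d ^ α * C := by ring
      calc (L N / C) ^ α⁻¹ ≤ (d ^ α) ^ α⁻¹ :=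
            Real.rpow_le_rpow (by positivity) h1 (inv_nonneg.mpr hα0.le)
        _ = d := Real.rpow_rpow_inv hd hα0.ne'
    have huK0 : (0:ℝ) < u K := hupos K (by omega)
    have ubound : u K ≤ (2 ^ α * C / L N) ^ (p * α)⁻¹ := by
      have hd : 0 ≤ ‖z (u K) - z (u (K+1))‖ := norm_nonneg _
      have h2 : ‖z (u K) - z (u (K+1))‖ ≤ 2 * u K ^ (-p) := by
        have h3 : ‖z (u K) - z (u (K+1))‖
            ≤ ‖z (u K)‖ + ‖z (u (K+1))‖ := by
          simpa using norm_sub_le (z (u K)) (z (u (K+1)))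
        rw [hzabs _ huK0, hzabs _ (hupos (K+1) le_rfl)] at h3
        have h4 : (u (K+1)) ^ (-p) ≤ (u K) ^ (-p) :=
          rpow_neg_anti hp0 huK0 (humono K le_rfl)
        linarith
      have h5 : L N ≤ C * (2 ^ α * u K ^ (-(p * α))) := by
        have h6 : ‖z (u K) - z (u (K+1))‖ ^ α ≤ (2 * u K ^ (-p)) ^ α :=
          Real.rpow_le_rpow hd h2 hα0.le
        have h7 : (2 * u K ^ (-p)) ^ α = 2 ^ α * u K ^ (-(p * α)) := by
          rw [Real.mul_rpow (by norm_num) (Real.rpow_nonneg huK0.le _),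
            ← Real.rpow_mul huK0.le]
          ring_nf
        calc L N ≤ C * ‖z (u K) - z (u (K+1))‖ ^ α :=
              le_trans (himgdlow K le_rfl) (hHolk K le_rfl)
          _ ≤ C * (2 * u K ^ (-p)) ^ α := by
              exact mul_le_mul_of_nonneg_left h6 hC.le
          _ = C * (2 ^ α * u K ^ (-(p * α))) := by rw [h7]
      have hpα : (0:ℝ) < p * α := by positivity
      have hxpos : (0:ℝ) < u K ^ (p * α) := Real.rpow_pos_of_pos huK0 _
      have h8 : u K ^ (p * α) ≤ 2 ^ α * C / L N := by
        rw [Real.rpow_neg huK0.le] at h5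
        rw [le_div_iff₀ hLN]
        have h9 : L N * u K ^ (p * α) ≤ (C * (2 ^ α * (u K ^ (p * α))⁻¹)) * u K ^ (p * α) :=
          mul_le_mul_of_nonneg_right h5 hxpos.le
        calc u K ^ (p * α) * L N = L N * u K ^ (p * α) := by ring
          _ ≤ (C * (2 ^ α * (u K ^ (p * α))⁻¹)) * u K ^ (p * α) := h9
          _ = 2 ^ α * C * ((u K ^ (p * α))⁻¹ * u K ^ (p * α)) := by ring
          _ = 2 ^ α * C := by rw [inv_mul_cancel₀ hxpos.ne']; ring
      calc u K = (u K ^ (p * α)) ^ (p * α)⁻¹ := (Real.rpow_rpow_inv huK0.le hpα.ne').symm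
        _ ≤ (2 ^ α * C / L N) ^ (p * α)⁻¹ :=
            Real.rpow_le_rpow hxpos.le h8 (inv_nonneg.mpr hpα.le)
    -- telescoping upper bound
    set FF : ℝ → ℝ := fun x => (2 / (1 - q)) * x ^ (1 - q) with hFFdef
    have teles : ∑ k ∈ Finset.range K, ‖z (u (k+1)) - z (u k)‖
        ≤ FF (u K) - FF (u 0) := by
      have each : ∀ k ∈ Finset.range K,
          ‖z (u (k+1)) - z (u k)‖ ≤ FF (u (k+1)) - FF (u k) := by
        intro k hk
        rw [Finset.mem_range] at hk
        have := spiral_chord p q hp0 hp hqp hq1 (hu2π k (by omega)) (humono k (by omega))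
        exact this
      calc ∑ k ∈ Finset.range K, ‖z (u (k+1)) - z (u k)‖
          ≤ ∑ k ∈ Finset.range K, (FF (u (k+1)) - FF (u k)) := Finset.sum_le_sum each
        _ = FF (u K) - FF (u 0) := Finset.sum_range_sub (fun k => FF (u k)) K
    have lowsum : (K : ℝ) * (L N / C) ^ α⁻¹
        ≤ ∑ k ∈ Finset.range K, ‖z (u (k+1)) - z (u k)‖ := by
      have each : ∀ k ∈ Finset.range K,
          (L N / C) ^ α⁻¹ ≤ ‖z (u (k+1)) - z (u k)‖ := by
        intro k hk
        rw [Finset.mem_range] at hk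
        rw [norm_sub_rev]
        exact chordlow k (by omega)
      calc (K : ℝ) * (L N / C) ^ α⁻¹
          = ∑ _k ∈ Finset.range K, (L N / C) ^ α⁻¹ := by
            rw [Finset.sum_const, Finset.card_range, nsmul_eq_mul]
        _ ≤ ∑ k ∈ Finset.range K, ‖z (u (k+1)) - z (u k)‖ :=
            Finset.sum_le_sum each
    have hFFmono : FF (u K) ≤ FF ((2 ^ α * C / L N) ^ (p * α)⁻¹) := by
      apply mul_le_mul_of_nonneg_left _ (div_nonneg (by norm_num) (by linarith) : (0:ℝ) ≤ 2 / (1 - q))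
      exact Real.rpow_le_rpow huK0.le ubound (by linarith)
    have hFF0 : 0 ≤ FF (u 0) := by
      apply mul_nonneg (div_nonneg (by norm_num) (by linarith) : (0:ℝ) ≤ 2 / (1 - q))
      exact Real.rpow_nonneg (hupos 0 (by omega)).le _
    calc (K : ℝ) * (L N / C) ^ α⁻¹
        ≤ FF (u K) - FF (u 0) := le_trans lowsum teles
      _ ≤ FF ((2 ^ α * C / L N) ^ (p * α)⁻¹) := by linarith
  -- the main inequality for every N
  have hmain : ∀ N : ℕ, 3 ≤ N →
      ((N:ℝ) - 3) * (L N / C) ^ α⁻¹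
        ≤ (2 / (1 - q)) * ((2 ^ α * C / L N) ^ (p * α)⁻¹) ^ (1 - q) := by
    intro N hN3
    obtain ⟨a, ha2π, hma⟩ := hfind 1 le_rfl
    have hma2 : L 2 ≤ m a := by
      rcases hma with h1 | h1
      · rw [h1]; exact hLanti 1 2 (by omega)
      · rw [h1]
    obtain ⟨b, hb2π, hmb⟩ := hfind N (by omega)
    have hmbN : m b ≤ L N := by
      rcases hmb with h1 | h1
      · rw [h1]
      · rw [h1]; exact hLanti N (N+1) (by omega)
    have hL2N : L N ≤ L 2 := hLanti 2 N (by omega)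
    have hcast : ((N - 3 : ℕ) : ℝ) = (N:ℝ) - 3 := by
      rw [Nat.cast_sub hN3]; norm_num
    rcases le_total a b with hab | hba
    · -- increasing case
      obtain ⟨t0, ht01, ht02, ht03⟩ := stepdec a b 2 ha2π hab (le_trans hmbN hL2N) hma2
      have ht02π : 2 * Real.pi ≤ t0 := le_trans ha2π ht01
      obtain ⟨u, hu1, hu2⟩ := hchain (N - 2) b t0 (fun k => k + 2) ht02π ht02 ht03
        (by
          intro k hk t ht hte hmt
          obtain ⟨t', h1, h2, h3⟩ := stepdec t b (k + 3) ht hte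
            (le_trans hmbN (hLanti (k+3) N (by omega)))
            (by rw [hmt]; exact hLanti (k+2) (k+3) (by omega))
          refine ⟨t', h1, h2, ?_⟩
          show m t' = L (k + 1 + 2)
          have hkk : k + 1 + 2 = k + 3 := by omega
          rw [hkk]
          exact h3)
      have hres := hcore N (N - 3) u (fun k => k + 2)
        (fun k hk => (hu1 k (by omega)).1)
        (fun k hk => hu2 k (by omega))
        (fun k hk => ⟨by change 1 ≤ k + 2; omega, by change k + 2 ≤ N; omega⟩)
        (fun k _ => Or.inl rfl)
        (fun k hk => (hu1 k (by omega)).2.2)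
      rw [← hcast]
      exact hres
    · -- decreasing case
      obtain ⟨t0, ht01, ht02, ht03⟩ := stepinc b a N hb2π hba hmbN (le_trans hL2N hma2)
      have ht02π : 2 * Real.pi ≤ t0 := le_trans hb2π ht01
      obtain ⟨u, hu1, hu2⟩ := hchain (N - 2) a t0 (fun k => N - k) ht02π ht02
        (by
          show m t0 = L (N - 0)
          rw [Nat.sub_zero]
          exact ht03)
        (by
          intro k hk t ht hte hmt
          obtain ⟨t', h1, h2, h3⟩ := stepinc t a (N - (k+1)) ht hte
            (by rw [hmt]; exact hLanti (N - (k+1)) (N - k) (by omega))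
            (le_trans (hLanti 2 (N - (k+1)) (by omega)) hma2)
          exact ⟨t', h1, h2, h3⟩)
      have hres := hcore N (N - 3) u (fun k => N - k)
        (fun k hk => (hu1 k (by omega)).1)
        (fun k hk => hu2 k (by omega))
        (fun k hk => ⟨by change 1 ≤ N - k; omega, by change N - k ≤ N; omega⟩)
        (fun k hk => Or.inr (by change N - k = N - (k + 1) + 1; omega))
        (fun k hk => (hu1 k (by omega)).2.2)
      rw [← hcast]
      exact hres
  -- final contradiction
  have hs0 : 0 < γ * (1 - q) + β := by
    have := mul_pos hγ0 (by linarith : (0:ℝ) < 1 - q)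
    linarith
  set s : ℝ := γ * (1 - q) + β with hsdef
  have hs1 : s < 1 := hkey
  set E : ℝ := (2 ^ α * C) ^ (p * α)⁻¹ with hEdef
  have hE0 : 0 < E := Real.rpow_pos_of_pos (by positivity) _
  set D : ℝ := (2 / (1 - q)) * E ^ (1 - q) * C ^ α⁻¹ with hDdef
  have hD0 : 0 < D :=
    mul_pos (mul_pos (div_pos two_pos (by linarith)) (Real.rpow_pos_of_pos hE0 _))
      (Real.rpow_pos_of_pos hC _)
  have hx8 : ∀ N : ℕ, 3 ≤ N → (N:ℝ) - 3 ≤ D * 8 ^ s * (N:ℝ) ^ s := by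
    intro N hN3
    have hres := hmain N hN3
    obtain ⟨x, hxdef⟩ : ∃ x : ℝ, x = Real.pi * ((N:ℝ) + 1) := ⟨_, rfl⟩
    have hx0 : (0:ℝ) < x := by rw [hxdef]; exact hσpos N
    have hLNx : L N = x ^ (-r) := by rw [hLdef, hxdef]
    have e1 : (L N / C) ^ α⁻¹ = x ^ (-β) / C ^ α⁻¹ := by
      rw [hLNx, Real.div_rpow (Real.rpow_nonneg hx0.le _) hC.le]
      congr 1
      rw [← Real.rpow_mul hx0.le]
      congr 1
      rw [hβdef, div_eq_mul_inv]
      ring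
    have e2 : (2 ^ α * C / L N) ^ (p * α)⁻¹ = E * x ^ γ := by
      have hγ2 : r * (p * α)⁻¹ = γ := by rw [hγdef, div_eq_mul_inv]
      rw [hLNx, Real.rpow_neg hx0.le, div_eq_mul_inv, inv_inv,
        Real.mul_rpow (by positivity) (Real.rpow_nonneg hx0.le _), hEdef,
        ← Real.rpow_mul hx0.le, hγ2]
    have e3 : (E * x ^ γ) ^ (1 - q) = E ^ (1 - q) * x ^ (γ * (1 - q)) := by
      rw [Real.mul_rpow hE0.le (Real.rpow_nonneg hx0.le _), ← Real.rpow_mul hx0.le]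
    rw [e1, e2, e3] at hres
    have hc1 : (0:ℝ) < C ^ α⁻¹ := Real.rpow_pos_of_pos hC _
    have ht1 : (0:ℝ) < x ^ β := Real.rpow_pos_of_pos hx0 _
    have hmul := mul_le_mul_of_nonneg_right hres (le_of_lt (mul_pos hc1 ht1))
    have eL : ((N:ℝ) - 3) * (x ^ (-β) / C ^ α⁻¹) * (C ^ α⁻¹ * x ^ β) = (N:ℝ) - 3 := by
      have hone : x ^ (-β) * x ^ β = 1 := by
        rw [← Real.rpow_add hx0]
        simp
      calc ((N:ℝ) - 3) * (x ^ (-β) / C ^ α⁻¹) * (C ^ α⁻¹ * x ^ β)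
          = ((N:ℝ) - 3) * (x ^ (-β) * x ^ β) * (C ^ α⁻¹ / C ^ α⁻¹) := by ring
        _ = (N:ℝ) - 3 := by rw [hone, div_self hc1.ne']; ring
    have eR : (2 / (1 - q)) * (E ^ (1 - q) * x ^ (γ * (1 - q))) * (C ^ α⁻¹ * x ^ β)
        = D * x ^ s := by
      rw [hDdef, hsdef, Real.rpow_add hx0]
      ring
    rw [eL, eR] at hmul
    have hx8N : x ≤ 8 * (N:ℝ) := by
      have hπ4 : Real.pi ≤ 4 := Real.pi_le_four
      have hN1 : (1:ℝ) ≤ (N:ℝ) := by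
        have : (3:ℕ) ≤ N := hN3
        have : (3:ℝ) ≤ (N:ℝ) := by exact_mod_cast this
        linarith
      nlinarith
    have hxs : x ^ s ≤ 8 ^ s * (N:ℝ) ^ s := by
      have := Real.rpow_le_rpow hx0.le hx8N hs0.le
      rwa [Real.mul_rpow (by norm_num) (Nat.cast_nonneg N)] at this
    calc (N:ℝ) - 3 ≤ D * x ^ s := hmul
      _ ≤ D * (8 ^ s * (N:ℝ) ^ s) := mul_le_mul_of_nonneg_left hxs hD0.le
      _ = D * 8 ^ s * (N:ℝ) ^ s := by ring
  set Dt : ℝ := D * 8 ^ s with hDtdef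
  have hDt0 : 0 < Dt := mul_pos hD0 (Real.rpow_pos_of_pos (by norm_num) _)
  have hev := (tendsto_rpow_atTop (by linarith : (0:ℝ) < 1 - s)).eventually_gt_atTop (2 * Dt)
  obtain ⟨Y, hY1, hY2⟩ := (hev.and (eventually_ge_atTop (7:ℝ))).exists
  set N : ℕ := ⌈Y⌉₊ with hNdef
  have hYN : Y ≤ (N:ℝ) := Nat.le_ceil Y
  have hN7 : (7:ℝ) ≤ (N:ℝ) := le_trans hY2 hYN
  have hN3 : 3 ≤ N := by
    have : (3:ℝ) ≤ (N:ℝ) := by linarith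
    exact_mod_cast this
  have hN0 : (0:ℝ) < (N:ℝ) := by linarith
  have h1 : 2 * Dt < (N:ℝ) ^ (1 - s) :=
    lt_of_lt_of_le hY1 (Real.rpow_le_rpow (by linarith : (0:ℝ) ≤ Y) hYN (by linarith))
  have h2 : Dt * (N:ℝ) ^ s < (N:ℝ) / 2 := by
    have h3 : (N:ℝ) ^ (1 - s) * (N:ℝ) ^ s = (N:ℝ) := by
      rw [← Real.rpow_add hN0]
      norm_num
    have h4 : (0:ℝ) < (N:ℝ) ^ s := Real.rpow_pos_of_pos hN0 _
    nlinarith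
  have h5 := hx8 N hN3
  linarith
end

section
/- Let X be a metric arc and s ≥ 1 with ‖X‖_{s-var} < ∞, and let f : [0,1] → X be a homeomorphism. If X' = f(I) where I is a closed subinterval of [0,1] with I ≠ [0,1] (so X' is a proper subarc of X), then ‖X'‖_{s-var} < ‖X‖_{s-var}. -/
open scoped ENNReal

/-- `f` parametrizes the metric space `X` as an arc: `f` is a continuous injection
of the compact interval `[0,1]` onto `X` (equivalently, a homeomorphism from `[0,1]`
onto `X`). -/
def IsArcParam {X : Type*} [MetricSpace X] (f : ℝ → X) : Prop :=
  ContinuousOn f (Set.Icc 0 1) ∧ Set.InjOn f (Set.Icc 0 1) ∧ f '' Set.Icc 0 1 = Set.univ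

/-- `X` is a metric arc: there is a homeomorphism from `[0,1]` onto `X`. -/
def IsMetricArc (X : Type*) [MetricSpace X] : Prop :=
  ∃ f : ℝ → X, IsArcParam f

/-- `A` is a subarc of the metric arc `X`: the image of a closed subinterval of `[0,1]`
under a homeomorphism from `[0,1]` onto `X`. -/
def IsSubarc {X : Type*} [MetricSpace X] (A : Set X) : Prop :=
  ∃ (f : ℝ → X) (a b : ℝ), IsArcParam f ∧ 0 ≤ a ∧ a ≤ b ∧ b ≤ 1 ∧ A = f '' Set.Icc a b

/-- The interior of a subarc `A`, described intrinsically: the points of `A` whose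
removal disconnects `A`.  For `A = f '' [a,b]` (with `a < b`) this is exactly
`f '' (a,b)`, i.e. `A` without its two endpoints. -/
def arcInterior {X : Type*} [MetricSpace X] (A : Set X) : Set X :=
  {x | x ∈ A ∧ ¬ IsPreconnected (A \ {x})}

/-- A partition of the metric arc `X`: a finite collection of subarcs with pairwise
disjoint interiors whose union is `X`. -/
def IsArcPartition {X : Type*} [MetricSpace X] (P : Finset (Set X)) : Prop :=
  (∀ A ∈ P, IsSubarc A) ∧
    ((P : Set (Set X)).Pairwise fun A B => Disjoint (arcInterior A) (arcInterior B)) ∧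
    ⋃₀ (P : Set (Set X)) = Set.univ

/-- The `s`-variation `‖X‖_{s-var}` of `X`: the supremum over all partitions of `X`
of the sums `∑ (diam A)^s`. -/
noncomputable def sVariation (X : Type*) [MetricSpace X] (s : ℝ) : ℝ≥0∞ :=
  ⨆ (P : Finset (Set X)) (_ : IsArcPartition P), ∑ A ∈ P, EMetric.diam A ^ s

/-- `H_{1/s}(X)`: the infimum of all `H` for which there is a surjection
`f : [0,1] → X` with `edist (f x) (f y) ≤ H * (edist x y)^(1/s)`; it equals `∞`
if no such surjection exists. -/
noncomputable def holderConstant (X : Type*) [MetricSpace X] (s : ℝ) : ℝ≥0∞ :=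
  sInf {H : ℝ≥0∞ | ∃ f : ℝ → X, f '' Set.Icc 0 1 = Set.univ ∧
    ∀ x ∈ Set.Icc (0:ℝ) 1, ∀ y ∈ Set.Icc (0:ℝ) 1, edist (f x) (f y) ≤ H * edist x y ^ (1 / s)}

section MyArcHelpers
open Set
variable {X : Type*} [MetricSpace X]

lemma MyArc.isSubarc_image {f : ℝ → X} (hf : IsArcParam f) {c d : ℝ}
    (h0 : 0 ≤ c) (hcd : c ≤ d) (h1 : d ≤ 1) : IsSubarc (f '' Icc c d) :=
  ⟨f, c, d, hf, h0, hcd, h1, rfl⟩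

lemma MyArc.arcInterior_image_subset {f : ℝ → X} (hf : IsArcParam f) {c d : ℝ}
    (h0 : 0 ≤ c) (h1 : d ≤ 1) :
    arcInterior (f '' Icc c d) ⊆ f '' Ioo c d := by
  rintro x ⟨hx, hnc⟩
  obtain ⟨t, ht, rfl⟩ := hx
  have hsub : Icc c d ⊆ Icc 0 1 := Icc_subset_Icc h0 h1
  by_contra hno
  apply hnc
  have htno : t ∉ Ioo c d := fun h => hno ⟨t, h, rfl⟩
  have hinj : Set.InjOn f (Icc c d) := hf.2.1.mono hsub
  rcases ht.1.eq_or_lt with h | hct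
  · subst h
    have he : f '' (Icc c d \ {c}) = f '' Icc c d \ f '' {c} :=
      hinj.image_diff_subset (singleton_subset_iff.mpr ht)
    rw [Icc_diff_left, image_singleton] at he
    rw [← he]
    exact isPreconnected_Ioc.image f (hf.1.mono (Ioc_subset_Icc_self.trans hsub))
  · have htd : t = d := by
      rcases ht.2.eq_or_lt with h | h
      · exact h
      · exact absurd ⟨hct, h⟩ htno
    subst htd
    have he : f '' (Icc c t \ {t}) = f '' Icc c t \ f '' {t} :=
      hinj.image_diff_subset (singleton_subset_iff.mpr ht)
    rw [Icc_sdiff_right, image_singleton] at he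
    rw [← he]
    exact isPreconnected_Ico.image f (hf.1.mono (Ico_subset_Icc_self.trans hsub))

lemma MyArc.disjoint_arcInterior {f : ℝ → X} (hf : IsArcParam f) {c d c' d' : ℝ}
    (h0 : 0 ≤ c) (h1 : d ≤ 1) (h0' : 0 ≤ c') (h1' : d' ≤ 1)
    (hd : Disjoint (Ioo c d) (Ioo c' d')) :
    Disjoint (arcInterior (f '' Icc c d)) (arcInterior (f '' Icc c' d')) := by
  rw [Set.disjoint_left]
  intro x hx hx'
  obtain ⟨t, ht, rfl⟩ := MyArc.arcInterior_image_subset hf h0 h1 hx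
  obtain ⟨t', ht', he⟩ := MyArc.arcInterior_image_subset hf h0' h1' hx'
  have : t' = t := hf.2.1 (Icc_subset_Icc h0' h1' (Ioo_subset_Icc_self ht'))
    (Icc_subset_Icc h0 h1 (Ioo_subset_Icc_self ht)) he
  exact Set.disjoint_left.mp hd ht (this ▸ ht')

lemma MyArc.disjoint_image_arcInterior {f : ℝ → X} (hf : IsArcParam f) {a b u v : ℝ}
    (ha : 0 ≤ a) (hb : b ≤ 1) (h0 : 0 ≤ u) (h1 : v ≤ 1)
    (hd : Disjoint (Icc a b) (Ioo u v)) :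
    Disjoint (f '' Icc a b) (arcInterior (f '' Icc u v)) := by
  rw [Set.disjoint_left]
  intro x hx hx'
  obtain ⟨t, ht, rfl⟩ := hx
  obtain ⟨t', ht', he⟩ := MyArc.arcInterior_image_subset hf h0 h1 hx'
  have : t' = t := hf.2.1 (Icc_subset_Icc h0 h1 (Ioo_subset_Icc_self ht'))
    (Icc_subset_Icc ha hb ht) he
  exact Set.disjoint_left.mp hd ht (this ▸ ht')

lemma MyArc.exists_homeo {f : ℝ → X} (hf : IsArcParam f) :
    ∃ h : (Icc (0:ℝ) 1) ≃ₜ X, ∀ t, h t = f t := by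
  have hc : Continuous ((Icc (0:ℝ) 1).restrict f) := hf.1.restrict
  have hinj : Function.Injective ((Icc (0:ℝ) 1).restrict f) :=
    (Set.injOn_iff_injective).mp hf.2.1
  have hsurj : Function.Surjective ((Icc (0:ℝ) 1).restrict f) := by
    intro x
    have hx : x ∈ f '' Icc 0 1 := hf.2.2 ▸ Set.mem_univ x
    obtain ⟨t, ht, rfl⟩ := hx
    exact ⟨⟨t, ht⟩, rfl⟩
  let e : (Icc (0:ℝ) 1) ≃ X := Equiv.ofBijective _ ⟨hinj, hsurj⟩
  have hce : Continuous e := hc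
  exact ⟨hce.homeoOfEquivCompactToT2, fun t => rfl⟩

lemma MyArc.lift_subarc {f : ℝ → X} (hf : IsArcParam f) {a b : ℝ}
    (ha : 0 ≤ a) (hb : b ≤ 1)
    {B : Set (f '' Icc a b : Set X)} (hB : IsSubarc B) :
    ∃ c d, a ≤ c ∧ c ≤ d ∧ d ≤ b ∧ Subtype.val '' B = f '' Icc c d := by
  obtain ⟨g, c, d, hg, hc0, hcd, hd1, rfl⟩ := hB
  obtain ⟨h, hh⟩ := MyArc.exists_homeo hf
  set V : Set X := Subtype.val '' (g '' Icc c d) with hV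
  have hgc : ContinuousOn g (Icc c d) := hg.1.mono (Icc_subset_Icc hc0 hd1)
  have hVcon : IsPreconnected V :=
    ((isPreconnected_Icc).image g hgc).image _ continuous_subtype_val.continuousOn
  have hVcp : IsCompact V :=
    (isCompact_Icc.image_of_continuousOn hgc).image continuous_subtype_val
  have hVne : V.Nonempty :=
    ⟨_, Set.mem_image_of_mem _ (Set.mem_image_of_mem _ (⟨le_refl c, hcd⟩ : c ∈ Icc c d))⟩
  set S : Set ℝ := Subtype.val '' (h.symm '' V) with hS
  have hScon : IsConnected S :=
    ⟨(hVne.image _).image _,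
      (hVcon.image _ h.symm.continuous.continuousOn).image _ continuous_subtype_val.continuousOn⟩
  have hScp : IsCompact S := (hVcp.image h.symm.continuous).image continuous_subtype_val
  have hfS : f '' S = V := by
    have h1 : ∀ T : Set (Icc (0:ℝ) 1), f '' (Subtype.val '' T) = h '' T := by
      intro T; rw [Set.image_image]; exact Set.image_congr fun t _ => (hh t).symm
    rw [hS, h1]
    simp [Set.image_image]
  have hVA : V ⊆ f '' Icc a b := Subtype.coe_image_subset _ _
  have hS01 : S ⊆ Icc 0 1 := Subtype.coe_image_subset _ _
  have hSab : S ⊆ Icc a b := by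
    intro x hx
    have hfx : f x ∈ f '' Icc a b := hVA (hfS ▸ Set.mem_image_of_mem f hx)
    obtain ⟨y, hy, hxy⟩ := hfx
    exact (hf.2.1 (Icc_subset_Icc ha hb hy) (hS01 hx) hxy) ▸ hy
  have hSne : S.Nonempty := hScon.1
  have heq : S = Icc (sInf S) (sSup S) := eq_Icc_of_connected_compact hScon hScp
  refine ⟨sInf S, sSup S, (hSab (hScp.sInf_mem hSne)).1,
    csInf_le_csSup hSne hScp.bddBelow hScp.bddAbove, (hSab (hScp.sSup_mem hSne)).2, ?_⟩
  rw [← heq]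
  exact hfS.symm

lemma MyArc.arcInterior_val_subset {A : Set X} (B : Set A) :
    arcInterior (Subtype.val '' B) ⊆ Subtype.val '' (arcInterior B) := by
  rintro x ⟨hx, hnc⟩
  obtain ⟨y, hy, rfl⟩ := hx
  refine ⟨y, ⟨hy, fun hpc => hnc ?_⟩, rfl⟩
  have : Subtype.val '' (B \ {y}) = Subtype.val '' B \ {(y : X)} := by
    rw [Set.image_diff Subtype.val_injective, Set.image_singleton]
  rw [← this]
  exact hpc.image _ continuous_subtype_val.continuousOn

lemma MyArc.union_triple {f : ℝ → X} (hf : IsArcParam f) {a b : ℝ}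
    (ha : 0 ≤ a) (hab : a ≤ b) (hb : b ≤ 1) :
    f '' Icc 0 a ∪ (f '' Icc b 1 ∪ f '' Icc a b) = Set.univ := by
  rw [← Set.image_union, ← Set.image_union, Set.union_comm (Icc b 1),
    Icc_union_Icc_eq_Icc hab hb, Icc_union_Icc_eq_Icc ha (hab.trans hb), hf.2.2]

lemma MyArc.partition_triple [DecidableEq (Set X)] {f : ℝ → X} (hf : IsArcParam f) {a b : ℝ}
    (ha : 0 ≤ a) (hab : a ≤ b) (hb : b ≤ 1) :
    IsArcPartition ({f '' Icc 0 a, f '' Icc b 1, f '' Icc a b} : Finset (Set X)) := by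
  have ha1 : a ≤ 1 := hab.trans hb
  have hb0 : 0 ≤ b := ha.trans hab
  have d01a : Disjoint (Ioo 0 a) (Ioo a b) := Set.disjoint_left.mpr fun x hx hy => absurd hy.1 (not_lt.mpr hx.2.le)
  have d01b : Disjoint (Ioo 0 a) (Ioo b 1) := Set.disjoint_left.mpr fun x hx hy => absurd (hx.2.trans_le hab) (not_lt.mpr hy.1.le)
  have dab1 : Disjoint (Ioo a b) (Ioo b 1) := Set.disjoint_left.mpr fun x hx hy => absurd hy.1 (not_lt.mpr hx.2.le)
  refine ⟨?_, ?_, ?_⟩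
  · intro A hA
    simp only [Finset.mem_insert, Finset.mem_singleton] at hA
    rcases hA with rfl | rfl | rfl
    · exact MyArc.isSubarc_image hf le_rfl ha ha1
    · exact MyArc.isSubarc_image hf hb0 hb le_rfl
    · exact MyArc.isSubarc_image hf ha hab hb
  · intro x hx y hy hne
    simp only [Finset.coe_insert, Finset.coe_singleton, Set.mem_insert_iff,
      Set.mem_singleton_iff] at hx hy
    rcases hx with rfl | rfl | rfl <;> rcases hy with rfl | rfl | rfl <;>
      first
        | exact absurd rfl hne
        | exact MyArc.disjoint_arcInterior hf le_rfl ha1 hb0 le_rfl d01b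
        | exact (MyArc.disjoint_arcInterior hf le_rfl ha1 hb0 le_rfl d01b).symm
        | exact MyArc.disjoint_arcInterior hf le_rfl ha1 ha hb d01a
        | exact (MyArc.disjoint_arcInterior hf le_rfl ha1 ha hb d01a).symm
        | exact (MyArc.disjoint_arcInterior hf ha hb hb0 le_rfl dab1).symm
        | exact MyArc.disjoint_arcInterior hf ha hb hb0 le_rfl dab1
  · rw [Finset.coe_insert, Set.sUnion_insert, Finset.coe_insert, Set.sUnion_insert,
      Finset.coe_singleton, Set.sUnion_singleton]
    exact MyArc.union_triple hf ha hab hb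

lemma MyArc.partition_lift [DecidableEq (Set X)] {f : ℝ → X} (hf : IsArcParam f) {a b : ℝ}
    (ha : 0 ≤ a) (hab : a ≤ b) (hb : b ≤ 1)
    {P : Finset (Set (f '' Icc a b : Set X))} (hP : IsArcPartition P) :
    IsArcPartition (insert (f '' Icc 0 a) (insert (f '' Icc b 1)
      (P.image (fun B => Subtype.val '' B)))) := by
  have ha1 : a ≤ 1 := hab.trans hb
  have hb0 : 0 ≤ b := ha.trans hab
  have d01b : Disjoint (Ioo 0 a) (Ioo b 1) := Set.disjoint_left.mpr fun x hx hy =>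
    absurd (hx.2.trans_le hab) (not_lt.mpr hy.1.le)
  have dAa : Disjoint (Icc a b) (Ioo 0 a) := Set.disjoint_left.mpr fun x hx hy =>
    absurd hx.1 (not_le.mpr hy.2)
  have dAb : Disjoint (Icc a b) (Ioo b 1) := Set.disjoint_left.mpr fun x hx hy =>
    absurd hx.2 (not_le.mpr hy.1)
  -- any image piece's interior sits inside A
  have himg : ∀ B : Set (f '' Icc a b : Set X),
      arcInterior (Subtype.val '' B) ⊆ f '' Icc a b := fun B x hx =>
    Subtype.coe_image_subset _ B hx.1
  have dS1 : ∀ B : Set (f '' Icc a b : Set X),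
      Disjoint (arcInterior (f '' Icc 0 a)) (arcInterior (Subtype.val '' B)) := fun B =>
    ((MyArc.disjoint_image_arcInterior hf ha hb le_rfl ha1 dAa).mono_left (himg B)).symm
  have dS2 : ∀ B : Set (f '' Icc a b : Set X),
      Disjoint (arcInterior (f '' Icc b 1)) (arcInterior (Subtype.val '' B)) := fun B =>
    ((MyArc.disjoint_image_arcInterior hf ha hb hb0 le_rfl dAb).mono_left (himg B)).symm
  refine ⟨?_, ?_, ?_⟩
  · intro A hA
    simp only [Finset.mem_insert, Finset.mem_image] at hA
    rcases hA with rfl | rfl | ⟨B, hB, rfl⟩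
    · exact MyArc.isSubarc_image hf le_rfl ha ha1
    · exact MyArc.isSubarc_image hf hb0 hb le_rfl
    · obtain ⟨c, d, hac, hcd, hdb, he⟩ := MyArc.lift_subarc hf ha hb (hP.1 B hB)
      rw [he]
      exact MyArc.isSubarc_image hf (ha.trans hac) hcd (hdb.trans hb)
  · intro x hx y hy hne
    simp only [Finset.coe_insert, Set.mem_insert_iff, Finset.mem_coe,
      Finset.mem_image] at hx hy
    rcases hx with rfl | rfl | ⟨B, hB, rfl⟩ <;> rcases hy with rfl | rfl | ⟨B', hB', rfl⟩
    · exact absurd rfl hne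
    · exact MyArc.disjoint_arcInterior hf le_rfl ha1 hb0 le_rfl d01b
    · exact dS1 B'
    · exact (MyArc.disjoint_arcInterior hf le_rfl ha1 hb0 le_rfl d01b).symm
    · exact absurd rfl hne
    · exact dS2 B'
    · exact (dS1 B).symm
    · exact (dS2 B).symm
    · have hBB' : B ≠ B' := fun h => hne (by rw [h])
      exact ((Set.disjoint_image_iff Subtype.val_injective).mpr
        (hP.2.1 hB hB' hBB')).mono (MyArc.arcInterior_val_subset B) (MyArc.arcInterior_val_subset B')
  · rw [Finset.coe_insert, Set.sUnion_insert, Finset.coe_insert, Set.sUnion_insert,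
      Finset.coe_image, ← Set.image_sUnion, hP.2.2, Subtype.coe_image_univ]
    exact MyArc.union_triple hf ha hab hb

lemma MyArc.final_aux {s : ℝ} {f : ℝ → X} (hf : IsArcParam f) {a b u v : ℝ}
    (ha : 0 ≤ a) (hab : a ≤ b) (hb : b ≤ 1) (huv : u < v)
    (hcomp : (u = 0 ∧ v = a) ∨ (u = b ∧ v = 1)) :
    sVariation (f '' Set.Icc a b) s + EMetric.diam (f '' Icc u v) ^ s ≤ sVariation X s := by
  classical
  have h0u : 0 ≤ u := by
    rcases hcomp with ⟨rfl, rfl⟩ | ⟨rfl, rfl⟩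
    exacts [le_rfl, ha.trans hab]
  have hv1 : v ≤ 1 := by
    rcases hcomp with ⟨rfl, rfl⟩ | ⟨rfl, rfl⟩
    exacts [hab.trans hb, le_rfl]
  have hsub01 : Icc a b ⊆ Icc (0:ℝ) 1 := Icc_subset_Icc ha hb
  -- Step 1 : every partition of the subarc gives a lower bound for `sVariation X s`.
  have step1 : ∀ P : Finset (Set (f '' Icc a b : Set X)), IsArcPartition P →
      (∑ B ∈ P, EMetric.diam B ^ s) + EMetric.diam (f '' Icc u v) ^ s ≤ sVariation X s := by
    intro P hP
    set Q : Finset (Set X) := insert (f '' Icc 0 a) (insert (f '' Icc b 1)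
      (P.image (fun B => Subtype.val '' B))) with hQdef
    have hQ : IsArcPartition Q := MyArc.partition_lift hf ha hab hb hP
    have hnotin : f '' Icc u v ∉ P.image (fun B => Subtype.val '' B) := by
      intro hmem
      simp only [Finset.mem_image] at hmem
      obtain ⟨B, hB, hBe⟩ := hmem
      have hsubA : f '' Icc u v ⊆ f '' Icc a b := hBe ▸ Subtype.coe_image_subset _ B
      rcases hcomp with ⟨rfl, rfl⟩ | ⟨rfl, rfl⟩
      · obtain ⟨t, ht, hte⟩ := hsubA ⟨0, ⟨le_rfl, huv.le⟩, rfl⟩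
        have ht0 : t = 0 := hf.2.1 (hsub01 ht) ⟨le_rfl, zero_le_one⟩ hte
        rw [ht0] at ht
        exact absurd ht.1 (not_le.mpr huv)
      · obtain ⟨t, ht, hte⟩ := hsubA ⟨1, ⟨huv.le, le_rfl⟩, rfl⟩
        have ht1 : t = 1 := hf.2.1 (hsub01 ht) ⟨zero_le_one, le_rfl⟩ hte
        rw [ht1] at ht
        exact absurd ht.2 (not_le.mpr huv)
    have hSQ : f '' Icc u v ∈ Q := by
      rcases hcomp with ⟨rfl, rfl⟩ | ⟨rfl, rfl⟩
      · exact Finset.mem_insert_self _ _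
      · exact Finset.mem_insert_of_mem (Finset.mem_insert_self _ _)
    have hsub : insert (f '' Icc u v) (P.image (fun B => Subtype.val '' B)) ⊆ Q := by
      refine Finset.insert_subset hSQ ?_
      intro C hC
      exact Finset.mem_insert_of_mem (Finset.mem_insert_of_mem hC)
    have hsum_img : ∑ C ∈ P.image (fun B => Subtype.val '' B), EMetric.diam C ^ s
        = ∑ B ∈ P, EMetric.diam B ^ s := by
      rw [Finset.sum_image (fun B _ B' _ h =>
        (Set.image_injective.mpr Subtype.val_injective) h)]
      exact Finset.sum_congr rfl fun B _ => by congr 1; exact isometry_subtype_coe.ediam_image B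
    calc (∑ B ∈ P, EMetric.diam B ^ s) + EMetric.diam (f '' Icc u v) ^ s
        = ∑ C ∈ insert (f '' Icc u v) (P.image (fun B => Subtype.val '' B)),
            EMetric.diam C ^ s := by
          rw [Finset.sum_insert hnotin, hsum_img, add_comm]
      _ ≤ ∑ C ∈ Q, EMetric.diam C ^ s := Finset.sum_le_sum_of_subset hsub
      _ ≤ sVariation X s := by
          simp only [sVariation]
          exact le_iSup₂ (f := fun (Q : Finset (Set X)) (_ : IsArcPartition Q) =>
            ∑ A ∈ Q, EMetric.diam A ^ s) Q hQ
  -- Step 2 : the complementary arc alone gives a lower bound.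
  have step2 : EMetric.diam (f '' Icc u v) ^ s ≤ sVariation X s := by
    have hQ0 : IsArcPartition ({f '' Icc 0 a, f '' Icc b 1, f '' Icc a b} : Finset (Set X)) :=
      MyArc.partition_triple hf ha hab hb
    have hmem : f '' Icc u v ∈ ({f '' Icc 0 a, f '' Icc b 1, f '' Icc a b} : Finset (Set X)) := by
      rcases hcomp with ⟨rfl, rfl⟩ | ⟨rfl, rfl⟩
      · exact Finset.mem_insert_self _ _
      · exact Finset.mem_insert_of_mem (Finset.mem_insert_self _ _)
    calc EMetric.diam (f '' Icc u v) ^ s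
        ≤ ∑ C ∈ ({f '' Icc 0 a, f '' Icc b 1, f '' Icc a b} : Finset (Set X)),
            EMetric.diam C ^ s :=
          Finset.single_le_sum (f := fun C => EMetric.diam C ^ s) (fun i _ => zero_le) hmem
      _ ≤ sVariation X s := by
          simp only [sVariation]
          exact le_iSup₂ (f := fun (Q : Finset (Set X)) (_ : IsArcPartition Q) =>
            ∑ A ∈ Q, EMetric.diam A ^ s) _ hQ0
  by_cases hex : ∃ P : Finset (Set (f '' Icc a b : Set X)), IsArcPartition P
  · simp only [sVariation]
    rw [ENNReal.biSup_add' hex]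
    exact iSup_le fun P => iSup_le fun hP => step1 P hP
  · have hzero : sVariation (f '' Icc a b : Set X) s = 0 := by
      refine le_antisymm ?_ zero_le
      simp only [sVariation]
      exact iSup_le fun P => iSup_le fun hP => (hex ⟨P, hP⟩).elim
    rw [hzero, zero_add]
    exact step2

end MyArcHelpers

/-- If `‖X‖_{s-var} < ∞` and `A = f '' I` is a proper subarc of `X` (where `f` is a
homeomorphism from `[0,1]` onto `X` and `I = [a,b] ⊆ [0,1]` with `I ≠ [0,1]`), then
`‖A‖_{s-var} < ‖X‖_{s-var}`. -/
theorem sVariation_properSubarc_lt (X : Type*) [MetricSpace X] (s : ℝ) (hs : 1 ≤ s)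
    (hfin : sVariation X s < ⊤) (f : ℝ → X) (hf : IsArcParam f)
    (a b : ℝ) (ha : 0 ≤ a) (hab : a ≤ b) (hb : b ≤ 1)
    (hne : Set.Icc a b ≠ Set.Icc (0:ℝ) 1) :
    sVariation (f '' Set.Icc a b) s < sVariation X s := by
  have hcase : 0 < a ∨ b < 1 := by
    by_contra h
    push_neg at h
    exact hne (by rw [le_antisymm h.1 ha, le_antisymm hb h.2])
  have key : ∀ u v : ℝ, u < v → ((u = 0 ∧ v = a) ∨ (u = b ∧ v = 1)) →
      sVariation (f '' Set.Icc a b) s < sVariation X s := by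
    intro u v huv hcomp
    have haux := MyArc.final_aux (s := s) hf ha hab hb huv hcomp
    have h0u : 0 ≤ u := by
      rcases hcomp with ⟨rfl, rfl⟩ | ⟨rfl, rfl⟩
      exacts [le_rfl, ha.trans hab]
    have hv1 : v ≤ 1 := by
      rcases hcomp with ⟨rfl, rfl⟩ | ⟨rfl, rfl⟩
      exacts [hab.trans hb, le_rfl]
    have hfne : f u ≠ f v := fun h =>
      absurd (hf.2.1 ⟨h0u, huv.le.trans hv1⟩ ⟨h0u.trans huv.le, hv1⟩ h) huv.ne
    have hu : f u ∈ f '' Set.Icc u v :=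
      Set.mem_image_of_mem f (Set.mem_Icc.mpr ⟨le_rfl, huv.le⟩)
    have hv : f v ∈ f '' Set.Icc u v :=
      Set.mem_image_of_mem f (Set.mem_Icc.mpr ⟨huv.le, le_rfl⟩)
    have hdpos : 0 < EMetric.diam (f '' Set.Icc u v) := by
      calc (0:ℝ≥0∞) < edist (f u) (f v) := by simpa [edist_pos] using hfne
        _ ≤ _ := EMetric.edist_le_diam_of_mem hu hv
    have hKne : EMetric.diam (f '' Set.Icc u v) ^ s ≠ 0 :=
      (ENNReal.rpow_pos_of_nonneg hdpos (zero_le_one.trans hs)).ne'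
    have hAfin : sVariation (f '' Set.Icc a b) s ≠ ⊤ :=
      (((self_le_add_right _ _).trans haux).trans_lt hfin).ne
    exact lt_of_lt_of_le (ENNReal.lt_add_right hAfin hKne) haux
  rcases hcase with h | h
  · exact key 0 a h (Or.inl ⟨rfl, rfl⟩)
  · exact key b 1 h (Or.inr ⟨rfl, rfl⟩)
end

section
/- Let X be a metric arc and s ≥ 1. Then ‖X‖_{s-var} ≥ max{ℋ^s(X), (diam X)^s}, where ℋ^s denotes the s-dimensional Hausdorff measure on X. -/
open scoped ENNReal

section SVarAux
open Set Filter
open scoped Classical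

section Aux
variable {X : Type*} [MetricSpace X]

lemma aux_arcInterior_subset (f : ℝ → X) (hf : IsArcParam f) {a b : ℝ}
    (h0 : 0 ≤ a) (hb : b ≤ 1) :
    arcInterior (f '' Set.Icc a b) ⊆ f '' Set.Ioo a b := by
  rintro x ⟨hxA, hnc⟩
  obtain ⟨t, ht, rfl⟩ := hxA
  have hsub : Set.Icc a b ⊆ Set.Icc (0:ℝ) 1 := Set.Icc_subset_Icc h0 hb
  have hinj : Set.InjOn f (Set.Icc a b) := hf.2.1.mono hsub
  have hcont : ContinuousOn f (Set.Icc a b) := hf.1.mono hsub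
  refine ⟨t, ?_, rfl⟩
  by_contra hto
  have hdiff : f '' Set.Icc a b \ {f t} = f '' (Set.Icc a b \ {t}) := by
    rw [hinj.image_diff]
    congr 1
    rw [Set.inter_eq_right.mpr (Set.singleton_subset_iff.mpr ht), Set.image_singleton]
  have hcase : t = a ∨ t = b := by
    rcases eq_or_lt_of_le ht.1 with h | h
    · exact Or.inl h.symm
    rcases eq_or_lt_of_le ht.2 with h' | h'
    · exact Or.inr h'
    · exact absurd ⟨h, h'⟩ hto
  apply hnc
  rw [hdiff]
  rcases hcase with rfl | rfl
  · rw [Set.Icc_diff_left]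
    exact isPreconnected_Ioc.image f (hcont.mono Set.Ioc_subset_Icc_self)
  · rw [Set.Icc_sdiff_right]
    exact isPreconnected_Ico.image f (hcont.mono Set.Ico_subset_Icc_self)

end Aux

section Aux2
variable {X : Type*} [MetricSpace X]

noncomputable def auxPiece (f : ℝ → X) (n : ℕ) (i : Fin (n+1)) : Set X :=
  f '' Set.Icc ((i : ℕ) / (n+1) : ℝ) (((i : ℕ) + 1) / (n+1) : ℝ)

lemma aux_cover (n : ℕ) : Set.Icc (0:ℝ) 1 ⊆ ⋃ i : Fin (n+1),
    Set.Icc ((i : ℕ) / (n+1) : ℝ) (((i : ℕ) + 1) / (n+1) : ℝ) := by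
  intro x hx
  have hn : (0:ℝ) < (n:ℝ) + 1 := by positivity
  set y := x * ((n:ℝ)+1) with hy
  have hy0 : 0 ≤ y := mul_nonneg hx.1 hn.le
  set m : ℕ := min n ⌊y⌋₊ with hm
  refine Set.mem_iUnion.mpr ⟨⟨m, Nat.lt_succ_of_le (min_le_left _ _)⟩, ?_, ?_⟩
  · show ((m:ℕ):ℝ)/((n:ℝ)+1) ≤ x
    rw [div_le_iff₀ hn]
    have h1 : (m:ℝ) ≤ (⌊y⌋₊:ℝ) := Nat.cast_le.mpr (min_le_right _ _)
    have h2 : (⌊y⌋₊:ℝ) ≤ y := Nat.floor_le hy0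
    linarith
  · show x ≤ (((m:ℕ):ℝ)+1)/((n:ℝ)+1)
    rw [le_div_iff₀ hn]
    rcases le_or_gt ⌊y⌋₊ n with h | h
    · have hm' : m = ⌊y⌋₊ := min_eq_right h
      have h3 := Nat.lt_floor_add_one y
      rw [hm']
      linarith
    · have hm' : m = n := min_eq_left h.le
      have h4 : y ≤ (n:ℝ)+1 := by nlinarith [hx.2]
      rw [hm']
      linarith

lemma aux_piece_union (f : ℝ → X) (hf : IsArcParam f) (n : ℕ) :
    ⋃ i : Fin (n+1), auxPiece f n i = Set.univ := by
  apply Set.eq_univ_of_univ_subset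
  rw [← hf.2.2]
  rintro _ ⟨t, ht, rfl⟩
  obtain ⟨i, hi⟩ := Set.mem_iUnion.mp (aux_cover n ht)
  exact Set.mem_iUnion.mpr ⟨i, ⟨t, hi, rfl⟩⟩

lemma aux_piece_endpoints (n : ℕ) (i : Fin (n+1)) :
    (0:ℝ) ≤ (i : ℕ) / (n+1) ∧ ((i:ℕ)/(n+1) : ℝ) ≤ ((i:ℕ)+1)/(n+1) ∧ (((i:ℕ)+1)/(n+1) : ℝ) ≤ 1 := by
  have hn : (0:ℝ) < (n:ℝ) + 1 := by positivity
  have hi : ((i:ℕ):ℝ) + 1 ≤ (n:ℝ) + 1 := by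
    have h := Nat.lt_succ_iff.mp i.2
    have : ((i:ℕ):ℝ) ≤ (n:ℝ) := by exact_mod_cast h
    linarith
  refine ⟨by positivity, by gcongr; linarith, ?_⟩
  rw [div_le_one hn]
  exact hi


variable {X : Type*} [MetricSpace X]

lemma aux_piece_injective (f : ℝ → X) (hf : IsArcParam f) (n : ℕ) :
    Function.Injective (auxPiece f n) := by
  intro i j h
  obtain ⟨hi0, hi1, hi2⟩ := aux_piece_endpoints n i
  obtain ⟨hj0, hj1, hj2⟩ := aux_piece_endpoints n j
  rw [auxPiece, auxPiece,
    hf.2.1.image_eq_image_iff (Set.Icc_subset_Icc hi0 hi2) (Set.Icc_subset_Icc hj0 hj2)] at h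
  have h1 : ((i:ℕ):ℝ)/(n+1) ∈ Set.Icc (((j:ℕ):ℝ)/(n+1)) ((((j:ℕ):ℝ)+1)/(n+1)) := by
    rw [← h]; exact ⟨le_refl _, hi1⟩
  have h2 : ((j:ℕ):ℝ)/(n+1) ∈ Set.Icc (((i:ℕ):ℝ)/(n+1)) ((((i:ℕ):ℝ)+1)/(n+1)) := by
    rw [h]; exact ⟨le_refl _, hj1⟩
  have heq : ((i:ℕ):ℝ)/(n+1) = ((j:ℕ):ℝ)/(n+1) := le_antisymm h2.1 h1.1
  have hn : ((n:ℝ)+1) ≠ 0 := by positivity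
  have : ((i:ℕ):ℝ) = ((j:ℕ):ℝ) := by
    field_simp at heq; exact_mod_cast heq
  exact Fin.ext (by exact_mod_cast this)

lemma aux_piece_partition (f : ℝ → X) (hf : IsArcParam f) (n : ℕ) :
    IsArcPartition (Finset.univ.image (auxPiece f n)) := by
  refine ⟨?_, ?_, ?_⟩
  · intro A hA
    obtain ⟨i, _, rfl⟩ := Finset.mem_image.mp hA
    obtain ⟨hi0, hi1, hi2⟩ := aux_piece_endpoints n i
    exact ⟨f, _, _, hf, hi0, hi1, hi2, rfl⟩
  · intro A hA B hB hAB
    simp only [Finset.coe_image, Set.mem_image, Finset.mem_coe] at hA hB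
    obtain ⟨i, _, rfl⟩ := hA
    obtain ⟨j, _, rfl⟩ := hB
    have hij : i ≠ j := fun h => hAB (by rw [h])
    obtain ⟨hi0, hi1, hi2⟩ := aux_piece_endpoints n i
    obtain ⟨hj0, hj1, hj2⟩ := aux_piece_endpoints n j
    refine Disjoint.mono (aux_arcInterior_subset f hf hi0 hi2)
      (aux_arcInterior_subset f hf hj0 hj2) ?_
    rw [Set.disjoint_iff_inter_eq_empty,
      ← hf.2.1.image_inter ((Set.Ioo_subset_Icc_self).trans (Set.Icc_subset_Icc hi0 hi2))
        ((Set.Ioo_subset_Icc_self).trans (Set.Icc_subset_Icc hj0 hj2))]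
    have : Set.Ioo (((i:ℕ):ℝ)/(n+1)) ((((i:ℕ):ℝ)+1)/(n+1)) ∩
        Set.Ioo (((j:ℕ):ℝ)/(n+1)) ((((j:ℕ):ℝ)+1)/(n+1)) = ∅ := by
      have hn : (0:ℝ) < (n:ℝ)+1 := by positivity
      rw [Set.eq_empty_iff_forall_notMem]
      rintro x ⟨⟨ha1, ha2⟩, ⟨hb1, hb2⟩⟩
      rcases lt_or_gt_of_ne hij with hlt | hlt
      · have : ((i:ℕ):ℝ) + 1 ≤ ((j:ℕ):ℝ) := by exact_mod_cast Nat.succ_le_of_lt hlt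
        have h1 : ((((i:ℕ):ℝ)+1)/(n+1)) ≤ (((j:ℕ):ℝ)/(n+1)) := by gcongr
        linarith
      · have : ((j:ℕ):ℝ) + 1 ≤ ((i:ℕ):ℝ) := by exact_mod_cast Nat.succ_le_of_lt hlt
        have h1 : ((((j:ℕ):ℝ)+1)/(n+1)) ≤ (((i:ℕ):ℝ)/(n+1)) := by gcongr
        linarith
    rw [this, Set.image_empty]
  · rw [Finset.coe_image, Set.sUnion_image]
    simpa using aux_piece_union f hf n


lemma aux_sum_le_sVariation (f : ℝ → X) (hf : IsArcParam f) (n : ℕ) (s : ℝ) :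
    ∑ i : Fin (n+1), EMetric.diam (auxPiece f n i) ^ s ≤ sVariation X s := by
  have hinj := aux_piece_injective f hf n
  have hsum : ∑ A ∈ Finset.univ.image (auxPiece f n), EMetric.diam A ^ s
      = ∑ i : Fin (n+1), EMetric.diam (auxPiece f n i) ^ s :=
    Finset.sum_image (fun i _ j _ h => hinj h)
  rw [← hsum]
  exact le_iSup₂ (f := fun (P : Finset (Set X)) (_ : IsArcPartition P) =>
    ∑ A ∈ P, EMetric.diam A ^ s) _ (aux_piece_partition f hf n)


end Aux2

/-- For a metric arc `X` and `s ≥ 1`,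
`‖X‖_{s-var} ≥ max{ℋ^s(X), (diam X)^s}`. -/
theorem sVariation_ge_max_hausdorff_diam (X : Type*) [MetricSpace X]
    [MeasurableSpace X] [BorelSpace X]
    (hX : IsMetricArc X) (s : ℝ) (hs : 1 ≤ s) :
    max ((MeasureTheory.Measure.hausdorffMeasure s : MeasureTheory.Measure X) Set.univ)
        (EMetric.diam (Set.univ : Set X) ^ s)
      ≤ sVariation X s := by
  obtain ⟨f, hf⟩ := hX
  refine max_le ?_ ?_
  · -- Hausdorff measure bound
    set r : ℕ → ℝ≥0∞ := fun n => ⨆ i : Fin (n+1), EMetric.diam (auxPiece f n i) with hr_def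
    have hr : Tendsto r atTop (nhds 0) := by
      rw [ENNReal.tendsto_nhds_zero]
      intro ε hε
      obtain ⟨δ, hδ, hδε⟩ := EMetric.uniformContinuousOn_iff.mp
        (isCompact_Icc.uniformContinuousOn_of_continuous hf.1) ε hε
      have htend : Tendsto (fun n : ℕ => ENNReal.ofReal (1/((n:ℝ)+1))) atTop (nhds 0) := by
        have h0 := tendsto_one_div_add_atTop_nhds_zero_nat (𝕜 := ℝ)
        have := (ENNReal.continuous_ofReal.tendsto 0).comp h0
        simpa [Function.comp_def] using this
      filter_upwards [htend.eventually_lt_const hδ] with n hn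
      refine iSup_le fun i => EMetric.diam_le ?_
      rintro _ ⟨u, hu, rfl⟩ _ ⟨v, hv, rfl⟩
      obtain ⟨hi0, hi1, hi2⟩ := aux_piece_endpoints n i
      have husub : u ∈ Set.Icc (0:ℝ) 1 := Set.Icc_subset_Icc hi0 hi2 hu
      have hvsub : v ∈ Set.Icc (0:ℝ) 1 := Set.Icc_subset_Icc hi0 hi2 hv
      have hlen : dist u v ≤ 1/((n:ℝ)+1) := by
        rw [Real.dist_eq, abs_sub_le_iff]
        have h1 := hu.1; have h2 := hu.2; have h3 := hv.1; have h4 := hv.2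
        have hn0 : (0:ℝ) < (n:ℝ)+1 := by positivity
        have hdd : ((((i:ℕ):ℝ)+1)/((n:ℝ)+1)) - (((i:ℕ):ℝ)/((n:ℝ)+1)) = 1/((n:ℝ)+1) := by
          field_simp
          ring
        constructor <;> linarith
      have : edist u v < δ := by
        rw [edist_dist]
        calc ENNReal.ofReal (dist u v) ≤ ENNReal.ofReal (1/((n:ℝ)+1)) :=
          ENNReal.ofReal_le_ofReal hlen
        _ < δ := hn
      exact (hδε husub hvsub this).le
    have hcov : ∀ᶠ n in atTop, (Set.univ : Set X) ⊆ ⋃ i : Fin (n+1), auxPiece f n i :=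
      Eventually.of_forall fun n => (aux_piece_union f hf n).symm.subset
    have hdi : ∀ᶠ n in atTop, ∀ i : Fin (n+1), EMetric.diam (auxPiece f n i) ≤ r n :=
      Eventually.of_forall fun n i => le_iSup (fun i => EMetric.diam (auxPiece f n i)) i
    have hmain := MeasureTheory.Measure.hausdorffMeasure_le_liminf_sum s (Set.univ : Set X)
      r hr (fun n i => auxPiece f n i) hdi hcov
    refine hmain.trans ?_
    have hle : ∀ n : ℕ, ∑ i : Fin (n+1), EMetric.diam (auxPiece f n i) ^ s ≤ sVariation X s :=
      fun n => aux_sum_le_sVariation f hf n s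
    calc liminf (fun n : ℕ => ∑ i : Fin (n+1), EMetric.diam (auxPiece f n i) ^ s) atTop
        ≤ liminf (fun _ : ℕ => sVariation X s) atTop :=
          Filter.liminf_le_liminf (Eventually.of_forall hle)
      _ = sVariation X s := Filter.liminf_const _
  · -- diameter bound
    have h := aux_sum_le_sVariation f hf 0 s
    rw [Fin.sum_univ_one] at h
    have hpiece : auxPiece f 0 (0 : Fin 1) = Set.univ := by
      rw [auxPiece, ← hf.2.2]
      norm_num
    rwa [hpiece] at h
end SVarAux
end

section
/- Let 0 < p ≤ q. Then for every j ∈ ℕ, the maximum of |t^{-p}cos t + i t^{-q}sin t| over t ∈ [2πj, 2π(j+1)] equals (2πj)^{-p}, and there exists a constant C > 0 (depending only on p and q) such that for every j ∈ ℕ the arclength of the curve t ↦ t^{-p}cos t + i t^{-q}sin t over [2πj, 2π(j+1)] is at most C (2πj)^{-p}; in other words, the elliptical spiral S_{p,q} is almost circular. -/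
open scoped ENNReal NNReal


/-- The parametrizing map `t ↦ t^{-p} cos t + i t^{-q} sin t` of the elliptical
spiral `S_{p,q}`. -/
noncomputable def ellipticalMap (p q : ℝ) : ℝ → ℂ :=
  fun t => (↑(t ^ (-p) * Real.cos t) : ℂ) + (↑(t ^ (-q) * Real.sin t) : ℂ) * Complex.I

/-- The elliptical spiral `S_{p,q} = {t^{-p} cos t + i t^{-q} sin t : t ∈ [2π, ∞)} ∪ {0}`. -/
noncomputable def ellipticalSpiral (p q : ℝ) : Set ℂ :=
  ellipticalMap p q '' Set.Ici (2 * Real.pi) ∪ {0}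

/-- The derivative of the elliptical map. -/
noncomputable def ellipticalDeriv (p q : ℝ) : ℝ → ℂ :=
  fun t => (↑((-p) * t ^ (-p - 1) * Real.cos t + t ^ (-p) * (-Real.sin t)) : ℂ)
    + (↑((-q) * t ^ (-q - 1) * Real.sin t + t ^ (-q) * Real.cos t) : ℂ) * Complex.I

lemma ellipticalMap_hasDerivAt (p q : ℝ) {t : ℝ} (ht : t ≠ 0) :
    HasDerivAt (ellipticalMap p q) (ellipticalDeriv p q t) t := by
  have h1 : HasDerivAt (fun s : ℝ => s ^ (-p)) ((-p) * t ^ (-p - 1)) t :=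
    Real.hasDerivAt_rpow_const (Or.inl ht)
  have h2 : HasDerivAt (fun s : ℝ => s ^ (-q)) ((-q) * t ^ (-q - 1)) t :=
    Real.hasDerivAt_rpow_const (Or.inl ht)
  have hre : HasDerivAt (fun s : ℝ => s ^ (-p) * Real.cos s)
      ((-p) * t ^ (-p - 1) * Real.cos t + t ^ (-p) * (-Real.sin t)) t :=
    h1.mul (Real.hasDerivAt_cos t)
  have him : HasDerivAt (fun s : ℝ => s ^ (-q) * Real.sin s)
      ((-q) * t ^ (-q - 1) * Real.sin t + t ^ (-q) * Real.cos t) t :=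
    h2.mul (Real.hasDerivAt_sin t)
  exact hre.ofReal_comp.add (him.ofReal_comp.mul_const Complex.I)

lemma abs_ellipticalMap_le (p q : ℝ) (hpq : p ≤ q) {t : ℝ} (ht : 1 ≤ t) :
    ‖ellipticalMap p q t‖ ≤ t ^ (-p) := by
  have hq : t ^ (-q) ≤ t ^ (-p) :=
    Real.rpow_le_rpow_of_exponent_le ht (by linarith)
  have hp0 : (0:ℝ) ≤ t ^ (-p) := Real.rpow_nonneg (by linarith) _
  have hq0 : (0:ℝ) ≤ t ^ (-q) := Real.rpow_nonneg (by linarith) _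
  rw [Complex.norm_def]
  have hnormsq : Complex.normSq (ellipticalMap p q t)
      = (t ^ (-p) * Real.cos t) ^ 2 + (t ^ (-q) * Real.sin t) ^ 2 := by
    simp only [ellipticalMap, Complex.normSq_apply, Complex.add_re, Complex.add_im,
      Complex.ofReal_re, Complex.ofReal_im, Complex.mul_re, Complex.mul_im,
      Complex.I_re, Complex.I_im]
    ring
  rw [hnormsq]
  have hb : (t ^ (-p) * Real.cos t) ^ 2 + (t ^ (-q) * Real.sin t) ^ 2 ≤ (t ^ (-p)) ^ 2 := by
    have h1 : (t ^ (-p) * Real.cos t) ^ 2 ≤ (t ^ (-p)) ^ 2 * (Real.cos t) ^ 2 := by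
      rw [mul_pow]
    have h2 : (t ^ (-q) * Real.sin t) ^ 2 ≤ (t ^ (-p)) ^ 2 * (Real.sin t) ^ 2 := by
      rw [mul_pow]
      have := sq_nonneg (Real.sin t)
      nlinarith [pow_le_pow_left₀ hq0 hq 2]
    calc (t ^ (-p) * Real.cos t) ^ 2 + (t ^ (-q) * Real.sin t) ^ 2
        ≤ (t ^ (-p)) ^ 2 * (Real.cos t) ^ 2 + (t ^ (-p)) ^ 2 * (Real.sin t) ^ 2 := by
          linarith
      _ = (t ^ (-p)) ^ 2 * ((Real.cos t) ^ 2 + (Real.sin t) ^ 2) := by ring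
      _ = (t ^ (-p)) ^ 2 := by rw [Real.cos_sq_add_sin_sq, mul_one]
  calc Real.sqrt ((t ^ (-p) * Real.cos t) ^ 2 + (t ^ (-q) * Real.sin t) ^ 2)
      ≤ Real.sqrt ((t ^ (-p)) ^ 2) := Real.sqrt_le_sqrt hb
    _ = t ^ (-p) := Real.sqrt_sq hp0

lemma abs_ellipticalDeriv_le (p q : ℝ) (hp : 0 < p) (hpq : p ≤ q) {t : ℝ} (ht : 1 ≤ t) :
    ‖ellipticalDeriv p q t‖ ≤ (p + q + 2) * t ^ (-p) := by
  have ht0 : (0:ℝ) ≤ t := by linarith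
  have hp1 : t ^ (-p - 1) ≤ t ^ (-p) := Real.rpow_le_rpow_of_exponent_le ht (by linarith)
  have hq1 : t ^ (-q - 1) ≤ t ^ (-p) := Real.rpow_le_rpow_of_exponent_le ht (by linarith)
  have hq : t ^ (-q) ≤ t ^ (-p) := Real.rpow_le_rpow_of_exponent_le ht (by linarith)
  have hp0 : (0:ℝ) ≤ t ^ (-p) := Real.rpow_nonneg ht0 _
  have hp10 : (0:ℝ) ≤ t ^ (-p - 1) := Real.rpow_nonneg ht0 _
  have hq10 : (0:ℝ) ≤ t ^ (-q - 1) := Real.rpow_nonneg ht0 _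
  have hq0 : (0:ℝ) ≤ t ^ (-q) := Real.rpow_nonneg ht0 _
  have hcos := Real.abs_cos_le_one t
  have hsin := Real.abs_sin_le_one t
  have habsre : |(-p) * t ^ (-p - 1) * Real.cos t + t ^ (-p) * (-Real.sin t)|
      ≤ (p + 1) * t ^ (-p) := by
    calc |(-p) * t ^ (-p - 1) * Real.cos t + t ^ (-p) * (-Real.sin t)|
        ≤ |(-p) * t ^ (-p - 1) * Real.cos t| + |t ^ (-p) * (-Real.sin t)| := abs_add_le _ _
      _ ≤ p * t ^ (-p - 1) + t ^ (-p) := by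
          rw [abs_mul, abs_mul, abs_mul, abs_neg, abs_neg, abs_of_nonneg hp.le,
            abs_of_nonneg hp10, abs_of_nonneg hp0]
          nlinarith [abs_nonneg (Real.cos t), abs_nonneg (Real.sin t),
            mul_nonneg hp.le hp10]
      _ ≤ (p + 1) * t ^ (-p) := by nlinarith
  have habsim : |(-q) * t ^ (-q - 1) * Real.sin t + t ^ (-q) * Real.cos t|
      ≤ (q + 1) * t ^ (-p) := by
    have hq' : 0 < q := lt_of_lt_of_le hp hpq
    calc |(-q) * t ^ (-q - 1) * Real.sin t + t ^ (-q) * Real.cos t|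
        ≤ |(-q) * t ^ (-q - 1) * Real.sin t| + |t ^ (-q) * Real.cos t| := abs_add_le _ _
      _ ≤ q * t ^ (-q - 1) + t ^ (-q) := by
          rw [abs_mul, abs_mul, abs_mul, abs_neg, abs_of_nonneg hq'.le,
            abs_of_nonneg hq10, abs_of_nonneg hq0]
          nlinarith [abs_nonneg (Real.cos t), abs_nonneg (Real.sin t),
            mul_nonneg hq'.le hq10]
      _ ≤ (q + 1) * t ^ (-p) := by nlinarith
  calc ‖ellipticalDeriv p q t‖
      ≤ ‖(↑((-p) * t ^ (-p - 1) * Real.cos t + t ^ (-p) * (-Real.sin t)) : ℂ)‖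
        + ‖(↑((-q) * t ^ (-q - 1) * Real.sin t + t ^ (-q) * Real.cos t) : ℂ)
          * Complex.I‖ := norm_add_le _ _
    _ = |(-p) * t ^ (-p - 1) * Real.cos t + t ^ (-p) * (-Real.sin t)|
        + |(-q) * t ^ (-q - 1) * Real.sin t + t ^ (-q) * Real.cos t| := by
          rw [norm_mul, Complex.norm_I, mul_one, Complex.norm_real, Complex.norm_real,
              Real.norm_eq_abs, Real.norm_eq_abs]
    _ ≤ (p + 1) * t ^ (-p) + (q + 1) * t ^ (-p) := add_le_add habsre habsim
    _ = (p + q + 2) * t ^ (-p) := by ring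

/-- For `0 < p ≤ q` and every `j ≥ 1`, the maximum of `|t^{-p} cos t + i t^{-q} sin t|`
over `t ∈ [2πj, 2π(j+1)]` equals `(2πj)^{-p}`, and there is `C > 0` (depending only on
`p, q`) such that the arclength of the `j`-th turn is at most `C (2πj)^{-p}`: the
elliptical spiral `S_{p,q}` is almost circular. -/
theorem ellipticalSpiral_almost_circular (p q : ℝ) (hp : 0 < p) (hpq : p ≤ q) :
    (∀ j : ℕ, 1 ≤ j →
      IsGreatest ((fun t => ‖ellipticalMap p q t‖) ''
          Set.Icc (2 * Real.pi * j) (2 * Real.pi * (j + 1)))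
        ((2 * Real.pi * j) ^ (-p))) ∧
    ∃ C > 0, ∀ j : ℕ, 1 ≤ j →
      eVariationOn (ellipticalMap p q) (Set.Icc (2 * Real.pi * j) (2 * Real.pi * (j + 1)))
        ≤ ENNReal.ofReal (C * (2 * Real.pi * j) ^ (-p)) := by
  have hπ := Real.pi_gt_three
  constructor
  · intro j hj
    set a : ℝ := 2 * Real.pi * j with ha
    have hj1 : (1:ℝ) ≤ (j:ℝ) := by exact_mod_cast hj
    have ha1 : (1:ℝ) ≤ a := by nlinarith
    constructor
    · -- attained at t = a
      refine ⟨a, ?_, ?_⟩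
      · exact ⟨le_refl _, by nlinarith⟩
      · have hcos : Real.cos a = 1 := by
          have : a = (j:ℝ) * (2 * Real.pi) := by ring
          rw [this]; exact Real.cos_nat_mul_two_pi j
        have hsin : Real.sin a = 0 := by
          have : a = (2 * j : ℕ) * Real.pi := by push_cast; ring
          rw [this]; exact Real.sin_nat_mul_pi (2 * j)
        simp only [ellipticalMap, hcos, hsin, mul_one, mul_zero, Complex.ofReal_zero,
          zero_mul, add_zero]
        rw [Complex.norm_real, Real.norm_eq_abs, abs_of_nonneg (Real.rpow_nonneg (by linarith) _)]
    · rintro x ⟨t, ht, rfl⟩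
      have ht1 : (1:ℝ) ≤ t := le_trans ha1 ht.1
      calc ‖ellipticalMap p q t‖ ≤ t ^ (-p) := abs_ellipticalMap_le p q hpq ht1
        _ ≤ a ^ (-p) := Real.rpow_le_rpow_of_nonpos (by linarith) ht.1 (by linarith)
  · refine ⟨2 * Real.pi * (p + q + 2), by have := Real.pi_pos; nlinarith, ?_⟩
    intro j hj
    set a : ℝ := 2 * Real.pi * j with ha
    set b : ℝ := 2 * Real.pi * (j + 1) with hb
    have hj1 : (1:ℝ) ≤ (j:ℝ) := by exact_mod_cast hj
    have ha1 : (1:ℝ) ≤ a := by nlinarith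
    have hab : a ≤ b := by nlinarith
    set M : ℝ := (p + q + 2) * a ^ (-p) with hM
    have hM0 : 0 ≤ M := mul_nonneg (by linarith) (Real.rpow_nonneg (by linarith) _)
    have hlip : LipschitzOnWith M.toNNReal (ellipticalMap p q) (Set.Icc a b) := by
      apply (convex_Icc a b).lipschitzOnWith_of_nnnorm_hasDerivWithin_le
        (f' := ellipticalDeriv p q)
      · intro x hx
        exact (ellipticalMap_hasDerivAt p q (by
          have := le_trans ha1 hx.1; linarith : x ≠ 0)).hasDerivWithinAt
      · intro x hx
        have hx1 : (1:ℝ) ≤ x := le_trans ha1 hx.1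
        have h1 : ‖ellipticalDeriv p q x‖ ≤ (p + q + 2) * x ^ (-p) :=
          abs_ellipticalDeriv_le p q hp hpq hx1
        have h2 : x ^ (-p) ≤ a ^ (-p) :=
          Real.rpow_le_rpow_of_nonpos (by linarith) hx.1 (by linarith)
        have h3 : ‖ellipticalDeriv p q x‖ ≤ M := by
          nlinarith
        rw [← norm_toNNReal]
        exact Real.toNNReal_mono h3
    have hcomp : eVariationOn (ellipticalMap p q) (Set.Icc a b)
        ≤ (M.toNNReal : ℝ≥0∞) * eVariationOn id (Set.Icc a b) := by
      have := hlip.comp_eVariationOn_le (Set.mapsTo_id (Set.Icc a b))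
      simpa [Function.comp_def] using this
    have hid : eVariationOn id (Set.Icc a b) ≤ ENNReal.ofReal (b - a) := by
      have hmono : MonotoneOn (id : ℝ → ℝ) (Set.Icc a b) := fun x _ y _ h => h
      have := hmono.eVariationOn_le (a := a) (b := b)
        ⟨le_refl a, hab⟩ ⟨hab, le_refl b⟩
      simpa [Set.inter_self] using this
    have hba : b - a = 2 * Real.pi := by rw [hb, ha]; ring
    calc eVariationOn (ellipticalMap p q) (Set.Icc a b)
        ≤ (M.toNNReal : ℝ≥0∞) * eVariationOn id (Set.Icc a b) := hcomp
      _ ≤ (M.toNNReal : ℝ≥0∞) * ENNReal.ofReal (b - a) :=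
          mul_le_mul_right hid _
      _ = ENNReal.ofReal M * ENNReal.ofReal (2 * Real.pi) := by
          rw [hba]; rfl
      _ = ENNReal.ofReal (M * (2 * Real.pi)) := (ENNReal.ofReal_mul hM0).symm
      _ = ENNReal.ofReal (2 * Real.pi * (p + q + 2) * a ^ (-p)) := by
          rw [hM]; ring_nf
end
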